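/- arXiv:2108.06864 — 3 statements merged into one kernel-verified Lean document; each statement's English description precedes it below -/
import Mathlib

section
/- Let R = ℤ[x_{ij}^{(k)}], let 𝔅 = ℤ[a_{il}^{(k)}, b_{jl}^{(k)} : 1 ≤ l ≤ h], both with their natural derivations, and define the ring homomorphism Q̃_h : R → 𝔅 by x_{ij}^{(k)} ↦ ∂̄^k Σ_{l=1}^h a_{il}^{(0)} b_{jl}^{(0)}. Then Q̃_h commutes with ∂̄^k for all k, and Q̃_h vanishes on the ideal R[h+1] generated by all (h+1)-minors det(x_{u_i v_j}^{(0)}) and their normalized derivatives; hence Q̃_h factors through a ring homomorphism Q_h : R/R[h+1] → 𝔅. -/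
open MvPolynomial

/-- `R = ℤ[x_{ij}^{(k)}]`. -/
abbrev PolyR (p q : ℕ) := MvPolynomial (Fin p × Fin q × ℕ) ℤ

/-- `𝔅 = ℤ[a_{il}^{(k)}, b_{jl}^{(k)} : 1 ≤ l ≤ h]`. -/
abbrev PolyB (p q h : ℕ) :=
  MvPolynomial ((Fin p × Fin h × ℕ) ⊕ (Fin q × Fin h × ℕ)) ℤ

/-- The derivation `∂` on `R` with `∂x_{ij}^{(k)} = (k+1)x_{ij}^{(k+1)}`. -/
noncomputable def derivR (p q : ℕ) : Derivation ℤ (PolyR p q) (PolyR p q) :=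
  mkDerivation ℤ fun v => ((v.2.2 : ℤ) + 1) • X (v.1, v.2.1, v.2.2 + 1)

/-- The derivation on `𝔅`. -/
noncomputable def derivB (p q h : ℕ) :
    Derivation ℤ (PolyB p q h) (PolyB p q h) :=
  mkDerivation ℤ fun v =>
    match v with
    | .inl (i, l, k) => ((k : ℤ) + 1) • X (.inl (i, l, k + 1))
    | .inr (j, l, k) => ((k : ℤ) + 1) • X (.inr (j, l, k + 1))

/-- `X_{ij}^{(k)} = ∂̄^k Σ_{l=1}^h a_{il}^{(0)} b_{jl}^{(0)}
  = Σ_l Σ_{k1+k2=k} a_{il}^{(k1)} b_{jl}^{(k2)}`. -/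
noncomputable def Xgen (p q h : ℕ) (i : Fin p) (j : Fin q) (k : ℕ) : PolyB p q h :=
  ∑ l : Fin h, ∑ m ∈ Finset.HasAntidiagonal.antidiagonal k,
    X (.inl (i, l, m.1)) * X (.inr (j, l, m.2))

/-- The ring homomorphism `Q̃_h : R → 𝔅`, `x_{ij}^{(k)} ↦ X_{ij}^{(k)}`. -/
noncomputable def Qtilde (p q h : ℕ) : PolyR p q →ₐ[ℤ] PolyB p q h :=
  aeval fun v => Xgen p q h v.1 v.2.1 v.2.2

/-- The ideal `R[m]` of `R` generated by all `m`-minors of `(x_{ij}^{(0)})` together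
with all their normalized derivatives `∂̄^n` (characterized by `n! • g = ∂^n B`). -/
noncomputable def minorIdeal (p q m : ℕ) : Ideal (PolyR p q) :=
  Ideal.span {g | ∃ (n : ℕ) (u : Fin m → Fin p) (v : Fin m → Fin q),
    StrictMono u ∧ StrictMono v ∧
    (n.factorial : ℤ) • g =
      (⇑(derivR p q))^[n]
        (Matrix.det (Matrix.of fun a b : Fin m => (X (u a, v b, 0) : PolyR p q)))}

lemma key_sum {S : Type*} [CommRing S] (f g : ℕ → S) (k : ℕ) :
    ∑ m ∈ Finset.HasAntidiagonal.antidiagonal k,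
      (((m.2 : ℤ) + 1) • (f m.1 * g (m.2 + 1)) + ((m.1 : ℤ) + 1) • (f (m.1 + 1) * g m.2))
    = ((k : ℤ) + 1) • ∑ m ∈ Finset.HasAntidiagonal.antidiagonal (k + 1), f m.1 * g m.2 := by
  have h1 : ∑ m ∈ Finset.HasAntidiagonal.antidiagonal (k + 1), (m.1 : ℤ) • (f m.1 * g m.2)
      = ∑ m ∈ Finset.HasAntidiagonal.antidiagonal k, ((m.1 : ℤ) + 1) • (f (m.1 + 1) * g m.2) := by
    rw [Finset.Nat.antidiagonal_succ, Finset.sum_cons, Finset.sum_map]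
    simp [Nat.succ_eq_add_one]
  have h2 : ∑ m ∈ Finset.HasAntidiagonal.antidiagonal (k + 1), (m.2 : ℤ) • (f m.1 * g m.2)
      = ∑ m ∈ Finset.HasAntidiagonal.antidiagonal k, ((m.2 : ℤ) + 1) • (f m.1 * g (m.2 + 1)) := by
    rw [Finset.Nat.antidiagonal_succ', Finset.sum_cons, Finset.sum_map]
    simp [Nat.succ_eq_add_one]
  rw [Finset.sum_add_distrib, ← h1, ← h2, Finset.smul_sum, ← Finset.sum_add_distrib]
  refine Finset.sum_congr rfl fun m hm => ?_
  rw [Finset.HasAntidiagonal.mem_antidiagonal] at hm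
  rw [← add_smul]
  congr 1
  omega

lemma derivB_X_inl (p q h : ℕ) (i : Fin p) (l : Fin h) (k : ℕ) :
    derivB p q h (X (.inl (i, l, k))) = ((k : ℤ) + 1) • X (.inl (i, l, k + 1)) := by
  simp [derivB, mkDerivation_X]

lemma derivB_X_inr (p q h : ℕ) (j : Fin q) (l : Fin h) (k : ℕ) :
    derivB p q h (X (.inr (j, l, k))) = ((k : ℤ) + 1) • X (.inr (j, l, k + 1)) := by
  simp [derivB, mkDerivation_X]

lemma derivB_Xgen (p q h : ℕ) (i : Fin p) (j : Fin q) (k : ℕ) :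
    derivB p q h (Xgen p q h i j k) = ((k : ℤ) + 1) • Xgen p q h i j (k + 1) := by
  unfold Xgen
  rw [map_sum, Finset.smul_sum]
  refine Finset.sum_congr rfl fun l _ => ?_
  rw [map_sum, ← key_sum (fun m1 => (X (.inl (i, l, m1)) : PolyB p q h))
    (fun m2 => (X (.inr (j, l, m2)) : PolyB p q h)) k]
  refine Finset.sum_congr rfl fun m _ => ?_
  rw [Derivation.leibniz, derivB_X_inl, derivB_X_inr, smul_eq_mul, smul_eq_mul]
  rw [mul_smul_comm, mul_smul_comm]
  ring_nf

lemma Qtilde_X (p q h : ℕ) (v : Fin p × Fin q × ℕ) :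
    Qtilde p q h (X v) = Xgen p q h v.1 v.2.1 v.2.2 := by
  simp [Qtilde]

lemma Qtilde_derivR (p q h : ℕ) (a : PolyR p q) :
    Qtilde p q h (derivR p q a) = derivB p q h (Qtilde p q h a) := by
  induction a using MvPolynomial.induction_on with
  | C a =>
      have h1 : derivR p q (C a) = 0 := by
        have : (C a : PolyR p q) = algebraMap ℤ (PolyR p q) a := rfl
        rw [this, Derivation.map_algebraMap]
      have h2 : (Qtilde p q h) (C a) = algebraMap ℤ (PolyB p q h) a := by
        simp [Qtilde]
      rw [h1, h2, map_zero, Derivation.map_algebraMap]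
  | add f g ih1 ih2 => rw [map_add, map_add, map_add, map_add, ih1, ih2]
  | mul_X f v ih =>
      rw [Derivation.leibniz, smul_eq_mul, smul_eq_mul, map_add, map_mul, map_mul,
        map_mul, Derivation.leibniz, smul_eq_mul, smul_eq_mul, ih]
      congr 1
      have : derivR p q (X v) = ((v.2.2 : ℤ) + 1) • X (v.1, v.2.1, v.2.2 + 1) := by
        simp [derivR, mkDerivation_X]
      rw [this, map_smul, Qtilde_X, Qtilde_X, derivB_Xgen]

lemma det_rect_prod_zero {S : Type*} [CommRing S] {h : ℕ}
    (A : Fin (h + 1) → Fin h → S) (B : Fin h → Fin (h + 1) → S) :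
    Matrix.det (Matrix.of fun a b : Fin (h + 1) => ∑ l : Fin h, A a l * B l b) = 0 := by
  set A' : Matrix (Fin (h + 1)) (Fin (h + 1)) S :=
    Matrix.of fun a b => if hb : (b : ℕ) < h then A a ⟨b, hb⟩ else 0 with hA'
  set B' : Matrix (Fin (h + 1)) (Fin (h + 1)) S :=
    Matrix.of fun a b => if ha : (a : ℕ) < h then B ⟨a, ha⟩ b else 0 with hB'
  have hM : (Matrix.of fun a b : Fin (h + 1) => ∑ l : Fin h, A a l * B l b) = A' * B' := by
    ext a b
    rw [Matrix.mul_apply]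
    rw [Fin.sum_univ_castSucc]
    have hlast : A' a (Fin.last h) = 0 := by
      simp [hA']
    rw [hlast, zero_mul, add_zero]
    simp only [Matrix.of_apply]
    refine Finset.sum_congr rfl fun l _ => ?_
    have h1 : ((Fin.castSucc l : Fin (h + 1)) : ℕ) < h := l.isLt
    rw [hA', hB']
    simp only [Matrix.of_apply, dif_pos h1]
    congr 1
  rw [hM, Matrix.det_mul]
  have : A'.det = 0 := by
    apply Matrix.det_eq_zero_of_column_eq_zero (Fin.last h)
    intro i
    simp [hA']
  rw [this, zero_mul]

lemma Qtilde_iterate (p q h : ℕ) (k : ℕ) (a : PolyR p q) :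
    Qtilde p q h ((⇑(derivR p q))^[k] a) = (⇑(derivB p q h))^[k] (Qtilde p q h a) := by
  induction k generalizing a with
  | zero => rfl
  | succ k ih =>
      rw [Function.iterate_succ_apply, Function.iterate_succ_apply, ih, Qtilde_derivR]

lemma Qtilde_minor_zero (p q h : ℕ) (u : Fin (h + 1) → Fin p) (v : Fin (h + 1) → Fin q) :
    Qtilde p q h
      (Matrix.det (Matrix.of fun a b : Fin (h + 1) => (X (u a, v b, 0) : PolyR p q))) = 0 := by
  have hdet := RingHom.map_det (Qtilde p q h).toRingHom
    (Matrix.of fun a b : Fin (h + 1) => (X (u a, v b, 0) : PolyR p q))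
  rw [show ⇑(Qtilde p q h).toRingHom = ⇑(Qtilde p q h) from rfl, RingHom.mapMatrix_apply] at hdet
  rw [hdet]
  have : ((Matrix.of fun a b : Fin (h + 1) => (X (u a, v b, 0) : PolyR p q)).map
      (Qtilde p q h).toRingHom)
      = Matrix.of fun a b : Fin (h + 1) =>
        ∑ l : Fin h, X (.inl (u a, l, 0)) * X (.inr (v b, l, 0)) := by
    refine Matrix.ext fun a b => ?_
    simp only [Matrix.map_apply, Matrix.of_apply]
    show (Qtilde p q h) (X (u a, v b, 0)) = _
    rw [Qtilde_X]
    simp [Xgen]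
  rw [this]
  exact det_rect_prod_zero (S := PolyB p q h) (h := h)
    (fun a l => X (.inl (u a, l, 0))) (fun l b => X (.inr (v b, l, 0)))

/-- `Q̃_h` commutes with the (iterated, hence normalized) derivations, vanishes on the
ideal `R[h+1]`, and hence factors through a ring homomorphism
`Q_h : R/R[h+1] → 𝔅`. -/
theorem Qtilde_commutes_and_factors (p q h : ℕ) :
    (∀ (k : ℕ) (a : PolyR p q),
        Qtilde p q h ((⇑(derivR p q))^[k] a) = (⇑(derivB p q h))^[k] (Qtilde p q h a)) ∧
    (∀ g ∈ minorIdeal p q (h + 1), Qtilde p q h g = 0) ∧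
    ∃ Qh : (PolyR p q ⧸ minorIdeal p q (h + 1)) →+* PolyB p q h,
      ∀ a : PolyR p q, Qh (Ideal.Quotient.mk (minorIdeal p q (h + 1)) a)
        = Qtilde p q h a := by
  have hker : ∀ g ∈ minorIdeal p q (h + 1), Qtilde p q h g = 0 := by
    intro g hg
    have hle : minorIdeal p q (h + 1) ≤ RingHom.ker (Qtilde p q h).toRingHom := by
      rw [minorIdeal, Ideal.span_le]
      rintro g ⟨n, u, v, hu, hv, heq⟩
      have h0 : (n.factorial : ℤ) • Qtilde p q h g = 0 := by
        rw [← map_smul, heq, Qtilde_iterate, Qtilde_minor_zero]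
        exact Function.iterate_fixed (map_zero _) n
      have := smul_eq_zero.mp h0
      rcases this with h1 | h1
      · exact absurd h1 (by exact_mod_cast Nat.factorial_ne_zero n)
      · exact h1
    exact hle hg
  refine ⟨Qtilde_iterate p q h, hker, ?_⟩
  refine ⟨Ideal.Quotient.lift _ (Qtilde p q h).toRingHom hker, fun a => ?_⟩
  exact Ideal.Quotient.lift_mk _ _ _
end

section
/- (Lemma 6.2) With S = {1,…,s}, row-derivations ∂_T = Σ_{l∈T} ∂_l and column-derivations (∂_*)_K = Σ_{l∈K} (∂_*)_l on ℤ[x_{ij}^{(k)} : i,j ∈ S], for subsets T, J, K ⊂ S with J ∩ T = ∅ and 0 ≤ a ≤ l: Σ_{I : |I|=|K|, J ⊂ I ⊂ S∖T} ε(I,K) ∂̄^a 𝒜(I,K) · ∂̄_T^{l−a} 𝒜(S∖I, S∖K) lies in the ideal 𝔯[s − |J| − |T| − a]. -/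
open MvPolynomial

/-- `ℤ[x_{ij}^{(k)} : i,j ∈ S = {1,…,s}, k ≥ 0]`. -/
abbrev PolyS (s : ℕ) := MvPolynomial (Fin s × Fin s × ℕ) ℤ

/-- The full derivation `∂` with `∂x_{ij}^{(k)} = (k+1)x_{ij}^{(k+1)}`. -/
noncomputable def dFull (s : ℕ) : Derivation ℤ (PolyS s) (PolyS s) :=
  mkDerivation ℤ fun v => ((v.2.2 : ℤ) + 1) • X (v.1, v.2.1, v.2.2 + 1)

/-- The row derivation `∂_l`, acting only on row `l`:
`∂_l x_{ij}^{(k)} = δ_i^l (k+1) x_{ij}^{(k+1)}`. -/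
noncomputable def dRow (s : ℕ) (l : Fin s) : Derivation ℤ (PolyS s) (PolyS s) :=
  mkDerivation ℤ fun v =>
    if v.1 = l then ((v.2.2 : ℤ) + 1) • X (v.1, v.2.1, v.2.2 + 1) else 0

/-- The column derivation `(∂_*)_l`, acting only on column `l`. -/
noncomputable def dCol (s : ℕ) (l : Fin s) : Derivation ℤ (PolyS s) (PolyS s) :=
  mkDerivation ℤ fun v =>
    if v.2.1 = l then ((v.2.2 : ℤ) + 1) • X (v.1, v.2.1, v.2.2 + 1) else 0

/-- `∂_N = Σ_{l ∈ N} ∂_l`. -/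
noncomputable def dRowSet (s : ℕ) (N : Finset (Fin s)) :
    Derivation ℤ (PolyS s) (PolyS s) :=
  ∑ l ∈ N, dRow s l

/-- `(∂_*)_N = Σ_{l ∈ N} (∂_*)_l`. -/
noncomputable def dColSet (s : ℕ) (N : Finset (Fin s)) :
    Derivation ℤ (PolyS s) (PolyS s) :=
  ∑ l ∈ N, dCol s l

/-- The minor `𝒜(I,K) = det (x_{ij}^{(0)})_{i∈I, j∈K}`, rows and columns taken in
increasing order (and `0` if `|I| ≠ |K|`). -/
noncomputable def minorA (s : ℕ) (I K : Finset (Fin s)) : PolyS s :=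
  if h : K.card = I.card then
    (Matrix.of fun a b : Fin I.card =>
      (X ((I.orderIsoOfFin rfl a : Fin s), (K.orderIsoOfFin h b : Fin s), 0) :
        PolyS s)).det
  else 0

/-- `ε(I,K) = (−1)^{Σ_{i∈I} i + Σ_{j∈K} j}` (indices counted `1,…,s`). -/
def epsSign (s : ℕ) (I K : Finset (Fin s)) : ℤ :=
  (-1) ^ (∑ i ∈ I, ((i : ℕ) + 1) + ∑ j ∈ K, ((j : ℕ) + 1))

/-- The ideal `𝔯[m]` generated by all `m`-minors and their normalized derivatives
(characterized by `n! • g = ∂^n 𝒜(I,K)`). -/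
noncomputable def minorIdealS (s m : ℕ) : Ideal (PolyS s) :=
  Ideal.span {g | ∃ (n : ℕ) (I K : Finset (Fin s)), I.card = m ∧ K.card = m ∧
    (n.factorial : ℤ) • g = (⇑(dFull s))^[n] (minorA s I K)}

open Finset

namespace L62

variable {s : ℕ}

lemma dsum_apply {ι : Type*} (t : Finset ι) (D : ι → Derivation ℤ (PolyS s) (PolyS s))
    (f : PolyS s) : (∑ l ∈ t, D l) f = ∑ l ∈ t, D l f := by
  classical
  induction t using Finset.induction_on with
  | empty => simp
  | @insert a t ha ih =>
      rw [Finset.sum_insert ha, Derivation.add_apply, ih, Finset.sum_insert ha]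

lemma dRowSet_X (N : Finset (Fin s)) (v : Fin s × Fin s × ℕ) :
    dRowSet s N (X v) =
      if v.1 ∈ N then ((v.2.2 : ℤ) + 1) • X (v.1, v.2.1, v.2.2 + 1) else 0 := by
  rw [dRowSet, dsum_apply]
  simp only [dRow, mkDerivation_X]
  simp

lemma dFull_eq : dFull s = dRowSet s Finset.univ := by
  apply derivation_ext
  intro v
  rw [dFull, mkDerivation_X, dRowSet_X, if_pos (Finset.mem_univ _)]

/-- the Taylor series of a variable (with respect to rows in `E`). -/
noncomputable def tay (E : Finset (Fin s)) (v : Fin s × Fin s × ℕ) :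
    PowerSeries (PolyS s) :=
  if v.1 ∈ E then
    PowerSeries.mk (fun n =>
      (Nat.choose (n + v.2.2) v.2.2 : ℤ) • X (v.1, v.2.1, v.2.2 + n))
  else PowerSeries.C (R := PolyS s) (X v)

/-- the Taylor homomorphism with respect to the row derivation of `E`. -/
noncomputable def Psi (E : Finset (Fin s)) : PolyS s →ₐ[ℤ] PowerSeries (PolyS s) :=
  aeval (tay E)

lemma Psi_X (E : Finset (Fin s)) (v : Fin s × Fin s × ℕ) : Psi E (X v) = tay E v :=
  aeval_X _ _

lemma coeff_zero_tay (E : Finset (Fin s)) (v : Fin s × Fin s × ℕ) :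
    PowerSeries.coeff (R := PolyS s) 0 (tay E v) = X v := by
  unfold tay
  split
  · rw [PowerSeries.coeff_mk]
    simp
  · simp

lemma constantCoeff_Psi (E : Finset (Fin s)) (f : PolyS s) :
    PowerSeries.constantCoeff (R := PolyS s) (Psi E f) = f := by
  induction f using MvPolynomial.induction_on with
  | C a =>
      rw [show (C a : PolyS s) = algebraMap ℤ (PolyS s) a from rfl]
      rw [AlgHom.commutes, PowerSeries.algebraMap_apply, PowerSeries.constantCoeff_C]
  | add p q hp hq => rw [map_add, map_add, hp, hq]
  | mul_X p v hp =>
      rw [map_mul, map_mul, hp, Psi_X, ← PowerSeries.coeff_zero_eq_constantCoeff_apply,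
        coeff_zero_tay]

lemma choose_key (n k : ℕ) :
    (Nat.choose (n + 1 + k) k) * (n + 1) = (k + 1) * Nat.choose (n + (k + 1)) (k + 1) := by
  have h1 := Nat.add_one_mul_choose_eq (n + k) k
  have h2 := Nat.add_one_mul_choose_eq (n + k) n
  have h3 : Nat.choose (n + k) n = Nat.choose (n + k) k := by
    have := Nat.choose_symm (Nat.le_add_right n k)
    simpa using this.symm
  have e1 : n + 1 + k = n + k + 1 := by omega
  have e2 : n + (k + 1) = n + k + 1 := by omega
  rw [e1, e2]
  have h4 : Nat.choose (n + k + 1) k = Nat.choose (n + k + 1) (n + 1) := by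
    have := Nat.choose_symm (show k ≤ n + k + 1 by omega)
    simpa [show n + k + 1 - k = n + 1 by omega] using this.symm
  rw [h4]
  calc Nat.choose (n + k + 1) (n + 1) * (n + 1) = Nat.succ (n + k) * Nat.choose (n + k) n := by
        rw [h2]
    _ = Nat.succ (n + k) * Nat.choose (n + k) k := by rw [h3]
    _ = Nat.choose (n + k + 1) (k + 1) * (k + 1) := by rw [h1]
    _ = (k + 1) * Nat.choose (n + k + 1) (k + 1) := by ring

lemma deriv_tay (E : Finset (Fin s)) (v : Fin s × Fin s × ℕ) :
    (PowerSeries.derivative (PolyS s)) (tay E v) = Psi E (dRowSet s E (X v)) := by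
  rw [dRowSet_X]
  unfold tay
  by_cases h : v.1 ∈ E
  · rw [if_pos h, if_pos h, map_zsmul, Psi_X, tay, if_pos h]
    ext n
    rw [PowerSeries.coeff_derivative, PowerSeries.coeff_mk, map_zsmul, PowerSeries.coeff_mk]
    have hidx : v.2.2 + (n + 1) = v.2.2 + 1 + n := by omega
    rw [hidx]
    set Y : PolyS s := X (v.1, v.2.1, v.2.2 + 1 + n) with hY
    rw [smul_mul_assoc]
    rw [show (Y * ((n : PolyS s) + 1)) = (((n : ℤ) + 1)) • Y by
      rw [zsmul_eq_mul]; push_cast; ring]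
    rw [smul_smul, smul_smul]
    have key : ((n + 1 + v.2.2).choose v.2.2 : ℤ) * ((n : ℤ) + 1)
        = ((v.2.2 : ℤ) + 1) * ((n + 1 + v.2.2).choose (v.2.2 + 1) : ℤ) := by
      have h0 := choose_key n v.2.2
      have e2 : n + (v.2.2 + 1) = n + 1 + v.2.2 := by omega
      rw [e2] at h0
      exact_mod_cast h0
    rw [show n + (v.2.2 + 1) = n + 1 + v.2.2 from by omega, key]
  · rw [if_neg h, if_neg h, map_zero]
    exact PowerSeries.derivative_C

lemma Psi_derivative (E : Finset (Fin s)) (f : PolyS s) :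
    Psi E (dRowSet s E f) = (PowerSeries.derivative (PolyS s)) (Psi E f) := by
  induction f using MvPolynomial.induction_on with
  | C a =>
      rw [show (C a : PolyS s) = algebraMap ℤ (PolyS s) a from rfl,
        Derivation.map_algebraMap, map_zero, AlgHom.commutes,
        PowerSeries.algebraMap_apply, PowerSeries.derivative_C]
  | add p q hp hq => rw [map_add, map_add, hp, hq, ← map_add, ← map_add]

  | mul_X p v hp =>
      rw [Derivation.leibniz, map_add, map_mul, Psi_X, Derivation.leibniz]
      rw [smul_eq_mul, smul_eq_mul, map_mul, map_mul, Psi_X, hp, ← deriv_tay,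
        smul_eq_mul, smul_eq_mul]

lemma factorial_coeff_Psi (E : Finset (Fin s)) (n : ℕ) (f : PolyS s) :
    (n.factorial : ℤ) • (PowerSeries.coeff (R := PolyS s) n (Psi E f)) =
      (⇑(dRowSet s E))^[n] f := by
  induction n generalizing f with
  | zero =>
      simpa using constantCoeff_Psi E f
  | succ n ih =>
      have h2 := ih (dRowSet s E f)
      rw [Psi_derivative, PowerSeries.coeff_derivative] at h2
      rw [Function.iterate_succ_apply, ← h2, Nat.factorial_succ]
      set c := PowerSeries.coeff (R := PolyS s) (n + 1) (Psi E f)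
      rw [show (c * ((n : PolyS s) + 1)) = (((n : ℤ) + 1)) • c by
        rw [zsmul_eq_mul]; push_cast; ring]
      rw [smul_smul]
      congr 1
      push_cast
      ring

end L62

namespace L62

variable {s : ℕ}

lemma minorIdeal_zero_eq_top : minorIdealS s 0 = ⊤ := by
  rw [Ideal.eq_top_iff_one]
  apply Ideal.subset_span
  refine ⟨0, ∅, ∅, Finset.card_empty, Finset.card_empty, ?_⟩
  have h1 : minorA s ∅ ∅ = 1 := by
    rw [minorA, dif_pos rfl]
    exact Matrix.det_fin_zero
  simp [h1]

lemma minorA_mem {I K : Finset (Fin s)} {m : ℕ} (h1 : I.card = m) (h2 : K.card = m) :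
    minorA s I K ∈ minorIdealS s m :=
  Ideal.subset_span ⟨0, I, K, h1, h2, by simp⟩

section Subdet

variable {R' : Type*} [CommRing R']

/-- the minor of a general matrix on rows `I` and columns `K`. -/
noncomputable def subdet (M : Matrix (Fin s) (Fin s) R') (I K : Finset (Fin s)) : R' :=
  if h : K.card = I.card then
    (Matrix.of fun a b : Fin I.card =>
      M (I.orderIsoOfFin rfl a : Fin s) (K.orderIsoOfFin h b : Fin s)).det
  else 0

lemma minorA_eq_subdet (I K : Finset (Fin s)) :
    minorA s I K = subdet (Matrix.of fun i j : Fin s => (X (i, j, 0) : PolyS s)) I K := rfl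

lemma subdet_eq (M : Matrix (Fin s) (Fin s) R') {k : ℕ} (I K : Finset (Fin s))
    (h1 : I.card = k) (h2 : K.card = k) :
    subdet M I K =
      (Matrix.of fun a b : Fin k =>
        M (I.orderEmbOfFin h1 a) (K.orderEmbOfFin h2 b)).det := by
  rw [subdet, dif_pos (h2.trans h1.symm)]
  rw [← Matrix.det_reindex_self (finCongr h1)
    (Matrix.of fun a b : Fin I.card =>
      M (I.orderIsoOfFin rfl a : Fin s) (K.orderIsoOfFin (h2.trans h1.symm) b : Fin s))]
  congr 1

lemma minorA_eq {k : ℕ} (I K : Finset (Fin s)) (h1 : I.card = k) (h2 : K.card = k) :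
    minorA s I K = (Matrix.of fun a b : Fin k =>
      (X (I.orderEmbOfFin h1 a, K.orderEmbOfFin h2 b, 0) : PolyS s)).det := by
  rw [minorA_eq_subdet, subdet_eq _ I K h1 h2]
  rfl

end Subdet

lemma det_X_mem :
    ∀ (p : ℕ) (m : ℕ) (ri cj : Fin p → Fin s) (e : Fin p → ℕ),
      m + (Finset.univ.filter fun q => e q ≠ 0).card ≤ p →
      (Matrix.of fun i q : Fin p => (X (ri i, cj q, e q) : PolyS s)).det ∈ minorIdealS s m := by
  intro p
  induction p with
  | zero =>
      intro m ri cj e hm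
      have hm0 : m = 0 := by omega
      subst hm0
      rw [minorIdeal_zero_eq_top]
      exact Submodule.mem_top
  | succ n ih =>
      intro m ri cj e hm
      by_cases he : ∃ q, e q ≠ 0
      · obtain ⟨q0, hq0⟩ := he
        rw [Matrix.det_succ_column _ q0]
        apply Ideal.sum_mem
        intro i _
        have hcard : (Finset.univ.filter fun q : Fin (n+1) => e q ≠ 0)
            = insert q0 ((Finset.univ.filter fun q' : Fin n => e (q0.succAbove q') ≠ 0).image
                q0.succAbove) := by
          ext x
          simp only [Finset.mem_filter, Finset.mem_univ, true_and, Finset.mem_insert,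
            Finset.mem_image]
          constructor
          · intro hx
            rcases eq_or_ne x q0 with h | h
            · exact Or.inl h
            · obtain ⟨y, hy⟩ := Fin.exists_succAbove_eq h
              exact Or.inr ⟨y, by rw [hy]; exact hx, hy⟩
          · rintro (rfl | ⟨y, hy, rfl⟩)
            · exact hq0
            · exact hy
        have hq0nm : q0 ∉ ((Finset.univ.filter fun q' : Fin n =>
            e (q0.succAbove q') ≠ 0).image q0.succAbove) := by
          simp only [Finset.mem_image, not_exists]
          rintro y ⟨-, hy⟩
          exact Fin.succAbove_ne q0 y hy
        have hcard2 : (Finset.univ.filter fun q' : Fin n => e (q0.succAbove q') ≠ 0).card + 1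
            = (Finset.univ.filter fun q : Fin (n+1) => e q ≠ 0).card := by
          rw [hcard, Finset.card_insert_of_notMem hq0nm,
            Finset.card_image_of_injective _ (Fin.succAbove_right_injective)]
        have hle : m + (Finset.univ.filter fun q' : Fin n => e (q0.succAbove q') ≠ 0).card ≤ n := by
          omega
        have hmem := ih m (fun i' => ri (i.succAbove i')) (fun q' => cj (q0.succAbove q'))
          (fun q' => e (q0.succAbove q')) hle
        exact Ideal.mul_mem_left _ _ hmem
      · push_neg at he
        by_cases hmn : m = n + 1
        · subst hmn
          by_cases hri : Function.Injective ri
          · by_cases hcj : Function.Injective cj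
            · set I' := Finset.univ.image ri with hI'
              set K' := Finset.univ.image cj with hK'
              have hIc : I'.card = n + 1 := by
                rw [hI', Finset.card_image_of_injective _ hri]; simp
              have hKc : K'.card = n + 1 := by
                rw [hK', Finset.card_image_of_injective _ hcj]; simp
              have hmemI : ∀ i, ri i ∈ I' := fun i => Finset.mem_image_of_mem _ (Finset.mem_univ i)
              have hmemK : ∀ q, cj q ∈ K' := fun q => Finset.mem_image_of_mem _ (Finset.mem_univ q)
              have hσinj : Function.Injective
                  (fun i => (I'.orderIsoOfFin hIc).symm ⟨ri i, hmemI i⟩) := by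
                intro a b hab
                apply hri
                have := congrArg (fun z => ((I'.orderIsoOfFin hIc) z : Fin s)) hab
                simpa using this
              have hτinj : Function.Injective
                  (fun q => (K'.orderIsoOfFin hKc).symm ⟨cj q, hmemK q⟩) := by
                intro a b hab
                apply hcj
                have := congrArg (fun z => ((K'.orderIsoOfFin hKc) z : Fin s)) hab
                simpa using this
              let σe : Equiv.Perm (Fin (n+1)) :=
                Equiv.ofBijective _ (Finite.injective_iff_bijective.mp hσinj)
              let τe : Equiv.Perm (Fin (n+1)) :=
                Equiv.ofBijective _ (Finite.injective_iff_bijective.mp hτinj)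
              have hmat : (Matrix.of fun i q : Fin (n+1) => (X (ri i, cj q, e q) : PolyS s))
                  = ((Matrix.of fun a b : Fin (n+1) =>
                      (X (I'.orderEmbOfFin hIc a, K'.orderEmbOfFin hKc b, 0) : PolyS s)).submatrix
                      σe id).submatrix id τe := by
                ext i q
                simp only [Matrix.submatrix_apply, Matrix.of_apply, id]
                have h1 : I'.orderEmbOfFin hIc (σe i) = ri i := by
                  show (I'.orderEmbOfFin hIc) ((I'.orderIsoOfFin hIc).symm ⟨ri i, hmemI i⟩) = ri i
                  rw [← Finset.coe_orderIsoOfFin_apply, OrderIso.apply_symm_apply]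
                have h2 : K'.orderEmbOfFin hKc (τe q) = cj q := by
                  show (K'.orderEmbOfFin hKc) ((K'.orderIsoOfFin hKc).symm ⟨cj q, hmemK q⟩) = cj q
                  rw [← Finset.coe_orderIsoOfFin_apply, OrderIso.apply_symm_apply]
                rw [h1, h2, he q]
              rw [hmat, Matrix.det_permute', Matrix.det_permute]
              apply Ideal.mul_mem_left
              apply Ideal.mul_mem_left
              rw [← minorA_eq I' K' hIc hKc]
              exact minorA_mem hIc hKc
            · obtain ⟨a, b, hab, hne⟩ : ∃ a b, cj a = cj b ∧ a ≠ b := by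
                simp only [Function.Injective, not_forall] at hcj
                obtain ⟨a, b, h1, h2⟩ := hcj
                exact ⟨a, b, h1, h2⟩
              have hz : (Matrix.of fun i q : Fin (n+1) => (X (ri i, cj q, e q) : PolyS s)).det
                  = 0 :=
                Matrix.det_zero_of_column_eq hne fun k => by
                  simp only [Matrix.of_apply, hab, he a, he b]
              rw [hz]
              exact Ideal.zero_mem _
          · obtain ⟨a, b, hab, hne⟩ : ∃ a b, ri a = ri b ∧ a ≠ b := by
              simp only [Function.Injective, not_forall] at hri
              obtain ⟨a, b, h1, h2⟩ := hri
              exact ⟨a, b, h1, h2⟩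
            have hz : (Matrix.of fun i q : Fin (n+1) => (X (ri i, cj q, e q) : PolyS s)).det
                = 0 :=
              Matrix.det_zero_of_row_eq hne (funext fun q => by simp only [Matrix.of_apply, hab])
            rw [hz]
            exact Ideal.zero_mem _
        · rw [Matrix.det_succ_row _ 0]
          apply Ideal.sum_mem
          intro j _
          have hf0 : (Finset.univ.filter fun q' : Fin n => e (j.succAbove q') ≠ 0) = ∅ := by
            ext x; simp [he]
          have hmem := ih m (fun i' => ri ((0 : Fin (n+1)).succAbove i'))
            (fun q' => cj (j.succAbove q')) (fun q' => e (j.succAbove q'))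
            (by rw [hf0]; simpa using by omega)
          exact Ideal.mul_mem_left _ _ hmem

end L62

namespace L62

variable {s : ℕ}

lemma smul_cancel {c : ℕ} (hc : c ≠ 0) {x y : PolyS s} (h : (c : ℤ) • x = (c : ℤ) • y) :
    x = y := by
  have h2 : ((c : ℤ) : PolyS s) * x = ((c : ℤ) : PolyS s) * y := by
    rw [← zsmul_eq_mul, ← zsmul_eq_mul]
    exact_mod_cast h
  have hc2 : ((c : ℤ) : PolyS s) ≠ 0 := by
    rw [show ((c : ℤ) : PolyS s) = C (c : ℤ) from (map_intCast (C : ℤ →+* PolyS s) _).symm]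
    rw [Ne, MvPolynomial.C_eq_zero]
    exact_mod_cast hc
  exact mul_left_cancel₀ hc2 h2

lemma coeff_Psi_univ_mem {m : ℕ} (I K : Finset (Fin s)) (h1 : I.card = m) (h2 : K.card = m)
    (n : ℕ) :
    PowerSeries.coeff (R := PolyS s) n (Psi Finset.univ (minorA s I K)) ∈ minorIdealS s m :=
  Ideal.subset_span ⟨n, I, K, h1, h2, by rw [factorial_coeff_Psi, dFull_eq]⟩

lemma orderEmbOfFin_erase (P : Finset (Fin s)) {k : ℕ} (hP : P.card = k + 1) (t : Fin (k + 1))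
    (hP' : (P.erase (P.orderEmbOfFin hP t)).card = k) (a : Fin k) :
    (P.erase (P.orderEmbOfFin hP t)).orderEmbOfFin hP' a = P.orderEmbOfFin hP (t.succAbove a) := by
  have h : (fun a : Fin k => P.orderEmbOfFin hP (t.succAbove a))
      = ⇑((P.erase (P.orderEmbOfFin hP t)).orderEmbOfFin hP') := by
    apply Finset.orderEmbOfFin_unique
    · intro x
      rw [Finset.mem_erase]
      exact ⟨(P.orderEmbOfFin hP).injective.ne (Fin.succAbove_ne t x),
        Finset.orderEmbOfFin_mem _ _ _⟩
    · exact (P.orderEmbOfFin hP).strictMono.comp (Fin.strictMono_succAbove t)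
  exact (congrFun h a).symm

lemma minorIdeal_step (m : ℕ) : minorIdealS s (m + 1) ≤ minorIdealS s m := by
  rw [minorIdealS, Ideal.span_le]
  rintro g ⟨n, I, K, hI, hK, hg⟩
  have hgen : g = PowerSeries.coeff (R := PolyS s) n (Psi Finset.univ (minorA s I K)) := by
    apply smul_cancel (Nat.factorial_ne_zero n)
    rw [hg, factorial_coeff_Psi, dFull_eq]
  rw [SetLike.mem_coe, hgen, minorA_eq I K hI hK, Matrix.det_succ_row _ 0, map_sum, map_sum]
  apply Ideal.sum_mem
  intro j _
  have hfm : I.orderEmbOfFin hI 0 ∈ I := Finset.orderEmbOfFin_mem _ _ _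
  have hgm : K.orderEmbOfFin hK j ∈ K := Finset.orderEmbOfFin_mem _ _ _
  have hI'' : (I.erase (I.orderEmbOfFin hI 0)).card = m := by
    rw [Finset.card_erase_of_mem hfm, hI]
    omega
  have hK'' : (K.erase (K.orderEmbOfFin hK j)).card = m := by
    rw [Finset.card_erase_of_mem hgm, hK]
    omega
  have hsub : ((Matrix.of fun a b : Fin (m + 1) =>
      (X (I.orderEmbOfFin hI a, K.orderEmbOfFin hK b, 0) : PolyS s)).submatrix
      (0 : Fin (m + 1)).succAbove j.succAbove) =
      Matrix.of fun a b : Fin m =>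
        (X ((I.erase (I.orderEmbOfFin hI 0)).orderEmbOfFin hI'' a,
            (K.erase (K.orderEmbOfFin hK j)).orderEmbOfFin hK'' b, 0) : PolyS s) := by
    ext a b
    simp only [Matrix.submatrix_apply, Matrix.of_apply]
    rw [orderEmbOfFin_erase I hI 0 hI'' a, orderEmbOfFin_erase K hK j hK'' b]
  rw [hsub, ← minorA_eq _ _ hI'' hK'']
  simp only [map_mul, PowerSeries.coeff_mul]
  apply Ideal.sum_mem
  intro p _
  exact Ideal.mul_mem_left _ _
    (coeff_Psi_univ_mem _ _ hI'' hK'' p.2)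

lemma minorIdeal_mono {m1 m2 : ℕ} (h : m1 ≤ m2) : minorIdealS s m2 ≤ minorIdealS s m1 := by
  induction m2 with
  | zero =>
      have : m1 = 0 := by omega
      subst this
      exact le_rfl
  | succ k ih =>
      rcases Nat.lt_or_ge m1 (k + 1) with hlt | hge
      · exact le_trans (minorIdeal_step k) (ih (by omega))
      · have : m1 = k + 1 := by omega
        subst this
        exact le_rfl

end L62

namespace L62

variable {s : ℕ}

/-- canonical splitting of `Fin s` as `Fin k ⊕ Fin q`. -/
def wEquiv {k q : ℕ} (hkq : k + q = s) : Fin k ⊕ Fin q ≃ Fin s :=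
  finSumFinEquiv.trans (finCongr hkq)

/-- the splitting of `Fin s` determined by a finset `P` : the first block is sent
increasingly onto `P`, the second onto `Pᶜ`. -/
def AEq (P : Finset (Fin s)) {k q : ℕ} (hk : P.card = k) (hq : Pᶜ.card = q) :
    Fin k ⊕ Fin q ≃ Fin s :=
  (Equiv.sumCongr (P.orderIsoOfFin hk).toEquiv
    ((Pᶜ.orderIsoOfFin hq).toEquiv.trans
      (Equiv.subtypeEquivRight (fun _ => Finset.mem_compl)))).trans
    (Equiv.sumCompl (· ∈ P))

lemma AEq_inl (P : Finset (Fin s)) {k q : ℕ} (hk : P.card = k) (hq : Pᶜ.card = q) (b : Fin k) :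
    AEq P hk hq (Sum.inl b) = P.orderEmbOfFin hk b := by
  simp [AEq]

lemma AEq_inr (P : Finset (Fin s)) {k q : ℕ} (hk : P.card = k) (hq : Pᶜ.card = q) (v : Fin q) :
    AEq P hk hq (Sum.inr v) = Pᶜ.orderEmbOfFin hq v := by
  simp [AEq]

/-- the permutation of `Fin s` comparing the `P`-splitting with the canonical one. -/
def cPerm {k q : ℕ} (hkq : k + q = s) (P : Finset (Fin s)) (hk : P.card = k)
    (hq : Pᶜ.card = q) : Equiv.Perm (Fin s) :=
  (wEquiv hkq).symm.trans (AEq P hk hq)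

lemma AEq_shift (Q : Finset (Fin s)) (p p1 : Fin s) (hp : p ∈ Q) (hp1 : p1 ∉ Q)
    (hsucc : (p1 : ℕ) = (p : ℕ) + 1) {k q : ℕ} (hk : Q.card = k) (hq : Qᶜ.card = q)
    (hk' : (insert p1 (Q.erase p)).card = k) (hq' : (insert p1 (Q.erase p))ᶜ.card = q) :
    ∀ z, AEq (insert p1 (Q.erase p)) hk' hq' z = Equiv.swap p p1 (AEq Q hk hq z) := by
  intro z
  cases z with
  | inl b =>
      rw [AEq_inl, AEq_inl]
      have key : (fun b : Fin k => Equiv.swap p p1 (Q.orderEmbOfFin hk b))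
          = ⇑((insert p1 (Q.erase p)).orderEmbOfFin hk') := by
        apply Finset.orderEmbOfFin_unique
        · intro x
          rcases eq_or_ne (Q.orderEmbOfFin hk x) p with hxp | hxp
          · rw [hxp, Equiv.swap_apply_left]
            exact Finset.mem_insert_self _ _
          · rw [Equiv.swap_apply_of_ne_of_ne hxp (by
              intro hx1
              exact hp1 (hx1 ▸ Finset.orderEmbOfFin_mem _ _ _))]
            exact Finset.mem_insert_of_mem
              (Finset.mem_erase.mpr ⟨hxp, Finset.orderEmbOfFin_mem _ _ _⟩)
        · intro a b hab
          have h1 : Q.orderEmbOfFin hk a < Q.orderEmbOfFin hk b :=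
            (Q.orderEmbOfFin hk).strictMono hab
          set x := Q.orderEmbOfFin hk a with hx
          set y := Q.orderEmbOfFin hk b with hy
          show Equiv.swap p p1 x < Equiv.swap p p1 y
          have hxne1 : x ≠ p1 := fun h => hp1 (h ▸ Finset.orderEmbOfFin_mem _ _ _)
          have hyne1 : y ≠ p1 := fun h => hp1 (h ▸ Finset.orderEmbOfFin_mem _ _ _)
          rcases eq_or_ne x p with rfl | hxp
          · rw [Equiv.swap_apply_left,
              Equiv.swap_apply_of_ne_of_ne (by exact fun h => absurd (h ▸ h1) (lt_irrefl _)) hyne1]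
            rw [Fin.lt_def] at h1 ⊢
            have : (y : ℕ) ≠ (p1 : ℕ) := fun h => hyne1 (Fin.ext h)
            omega
          · rcases eq_or_ne y p with rfl | hyp
            · rw [Equiv.swap_apply_left, Equiv.swap_apply_of_ne_of_ne hxp hxne1]
              rw [Fin.lt_def] at h1 ⊢
              omega
            · rw [Equiv.swap_apply_of_ne_of_ne hxp hxne1,
                Equiv.swap_apply_of_ne_of_ne hyp hyne1]
              exact h1
      exact (congrFun key b).symm
  | inr v =>
      rw [AEq_inr, AEq_inr]
      have hpmem : p ∈ (insert p1 (Q.erase p))ᶜ := by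
        simp only [Finset.mem_compl, Finset.mem_insert, Finset.mem_erase, not_or]
        refine ⟨fun h => ?_, fun h => h.1 rfl⟩
        rw [h] at hsucc; omega
      have key : (fun v : Fin q => Equiv.swap p p1 (Qᶜ.orderEmbOfFin hq v))
          = ⇑((insert p1 (Q.erase p))ᶜ.orderEmbOfFin hq') := by
        apply Finset.orderEmbOfFin_unique
        · intro x
          have hxc : Qᶜ.orderEmbOfFin hq x ∈ Qᶜ := Finset.orderEmbOfFin_mem _ _ _
          have hxnp : Qᶜ.orderEmbOfFin hq x ≠ p := by
            intro h
            rw [Finset.mem_compl, h] at hxc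
            exact hxc hp
          rcases eq_or_ne (Qᶜ.orderEmbOfFin hq x) p1 with hxp1 | hxp1
          · rw [hxp1, Equiv.swap_apply_right]
            exact hpmem
          · rw [Equiv.swap_apply_of_ne_of_ne hxnp hxp1]
            simp only [Finset.mem_compl, Finset.mem_insert, Finset.mem_erase, not_or] at hxc ⊢
            exact ⟨hxp1, fun h => hxc h.2⟩
        · intro a b hab
          have h1 : Qᶜ.orderEmbOfFin hq a < Qᶜ.orderEmbOfFin hq b :=
            (Qᶜ.orderEmbOfFin hq).strictMono hab
          set x := Qᶜ.orderEmbOfFin hq a with hx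
          set y := Qᶜ.orderEmbOfFin hq b with hy
          show Equiv.swap p p1 x < Equiv.swap p p1 y
          have hxc : x ∈ Qᶜ := Finset.orderEmbOfFin_mem _ _ _
          have hyc : y ∈ Qᶜ := Finset.orderEmbOfFin_mem _ _ _
          have hxnp : x ≠ p := fun h => (Finset.mem_compl.mp (h ▸ hxc)) hp
          have hynp : y ≠ p := fun h => (Finset.mem_compl.mp (h ▸ hyc)) hp
          rcases eq_or_ne x p1 with rfl | hxp1
          · rw [Equiv.swap_apply_right,
              Equiv.swap_apply_of_ne_of_ne hynp (by
                exact fun h => absurd (h ▸ h1) (lt_irrefl _))]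
            rw [Fin.lt_def] at h1 ⊢
            omega
          · rcases eq_or_ne y p1 with rfl | hyp1
            · rw [Equiv.swap_apply_right, Equiv.swap_apply_of_ne_of_ne hxnp hxp1]
              rw [Fin.lt_def] at h1 ⊢
              have : (x : ℕ) ≠ (p : ℕ) := fun h => hxnp (Fin.ext h)
              omega
            · rw [Equiv.swap_apply_of_ne_of_ne hxnp hxp1,
                Equiv.swap_apply_of_ne_of_ne hynp hyp1]
              exact h1
      exact (congrFun key v).symm

lemma AEq_congr {P P' : Finset (Fin s)} (h : P = P') {k q : ℕ} (hk : P.card = k)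
    (hq : Pᶜ.card = q) (hk' : P'.card = k) (hq' : P'ᶜ.card = q) (z : Fin k ⊕ Fin q) :
    AEq P hk hq z = AEq P' hk' hq' z := by
  subst h
  rfl

lemma sign_cPerm_aux {k q : ℕ} (hkq : k + q = s) :
    ∀ (N : ℕ) (P : Finset (Fin s)) (hk : P.card = k) (hq : Pᶜ.card = q),
      (∑ x ∈ P, (x : ℕ)) = N →
      Equiv.Perm.sign (cPerm hkq P hk hq)
        = (-1) ^ (N + ∑ i ∈ Finset.range k, i) := by
  intro N
  induction N using Nat.strong_induction_on with
  | _ N ih =>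
    intro P hk hq hN
    by_cases hdc : ∀ x ∈ P, ∀ y : Fin s, y ≤ x → y ∈ P
    · -- `P` is the initial segment
      have hseg : ∀ x : Fin s, x ∈ P ↔ (x : ℕ) < k := by
        intro x
        constructor
        · intro hx
          by_contra hge
          push_neg at hge
          have hsub : Finset.Iic x ⊆ P := fun y hy => hdc x hx y (Finset.mem_Iic.mp hy)
          have := Finset.card_le_card hsub
          rw [Fin.card_Iic, hk] at this
          omega
        · intro hxk
          by_contra hx
          have hsub : P ⊆ Finset.Iio x := by
            intro z hz
            rw [Finset.mem_Iio]
            rcases lt_or_ge z x with h | h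
            · exact h
            · exact absurd (hdc z hz x h) hx
          have := Finset.card_le_card hsub
          rw [Fin.card_Iio, hk] at this
          omega
      have hks : k ≤ s := by omega
      have hA : ∀ z, AEq P hk hq z = wEquiv hkq z := by
        intro z
        cases z with
        | inl b =>
            rw [AEq_inl]
            have h1 : (fun b : Fin k => (Fin.castLE hks b : Fin s)) = ⇑(P.orderEmbOfFin hk) := by
              apply Finset.orderEmbOfFin_unique
              · intro x
                rw [hseg]
                simp
              · intro a b hab
                rw [Fin.lt_def] at hab
                simp only [Fin.lt_def, Fin.coe_castLE]
                exact hab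
            rw [← congrFun h1 b]
            apply Fin.ext
            simp only [wEquiv, Equiv.trans_apply, finSumFinEquiv_apply_left, finCongr_apply,
              Fin.coe_cast, Fin.coe_castAdd, Fin.coe_castLE]
        | inr v =>
            rw [AEq_inr]
            have h1 : (fun v : Fin q => (⟨k + (v : ℕ), by omega⟩ : Fin s)) = ⇑(Pᶜ.orderEmbOfFin hq) := by
              apply Finset.orderEmbOfFin_unique
              · intro x
                rw [Finset.mem_compl, hseg]
                simp
              · intro a b hab
                rw [Fin.lt_def] at hab
                simp only [Fin.mk_lt_mk]
                omega
            rw [← congrFun h1 v]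
            apply Fin.ext
            simp only [wEquiv, Equiv.trans_apply, finSumFinEquiv_apply_right, finCongr_apply,
              Fin.coe_cast, Fin.coe_natAdd]
      have hc : cPerm hkq P hk hq = Equiv.refl (Fin s) := by
        apply Equiv.ext
        intro x
        show AEq P hk hq ((wEquiv hkq).symm x) = x
        rw [hA, Equiv.apply_symm_apply]
      have himg : P.image (fun x : Fin s => (x : ℕ)) = Finset.range k := by
        ext i
        simp only [Finset.mem_image, Finset.mem_range]
        constructor
        · rintro ⟨x, hx, rfl⟩
          exact (hseg x).mp hx
        · intro hi
          exact ⟨⟨i, by omega⟩, (hseg _).mpr hi, rfl⟩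
      have hsum : N = ∑ i ∈ Finset.range k, i := by
        rw [← hN, ← himg, Finset.sum_image (fun x _ y _ h => Fin.ext h)]
      rw [hc, hsum]
      rw [show Equiv.refl (Fin s) = (1 : Equiv.Perm (Fin s)) from rfl, map_one]
      rw [← two_mul, pow_mul, Int.units_sq, one_pow]
    · -- strip the largest "movable" element
      push_neg at hdc
      obtain ⟨x0, hx0, y0, hy0le, hy0⟩ := hdc
      have hSne : x0 ∈ P.filter (fun z => y0 < z) := by
        rw [Finset.mem_filter]
        exact ⟨hx0, lt_of_le_of_ne hy0le fun h => hy0 (h ▸ hx0)⟩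
      set S := P.filter (fun z => y0 < z) with hS
      set xs := S.min' ⟨x0, hSne⟩ with hxs
      have hxsS : xs ∈ S := Finset.min'_mem _ _
      have hxsP : xs ∈ P := (Finset.mem_filter.mp hxsS).1
      have hy0xs : y0 < xs := (Finset.mem_filter.mp hxsS).2
      have hxspos : 0 < (xs : ℕ) := by
        rcases Nat.eq_zero_or_pos (xs : ℕ) with h | h
        · rw [Fin.lt_def] at hy0xs; omega
        · exact h
      set pred : Fin s := ⟨(xs : ℕ) - 1, by omega⟩ with hpred
      have hpredP : pred ∉ P := by
        intro hp
        rcases lt_or_ge y0 pred with hyp | hyp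
        · have hpS : pred ∈ S := Finset.mem_filter.mpr ⟨hp, hyp⟩
          have := Finset.min'_le S pred hpS
          rw [Fin.le_def] at this
          have hpv : (pred : ℕ) = (xs : ℕ) - 1 := rfl
          omega
        · have hpv : (pred : ℕ) = (xs : ℕ) - 1 := rfl
          have : y0 = pred := by
            apply le_antisymm
            · rw [Fin.le_def]
              rw [Fin.lt_def] at hy0xs
              omega
            · exact hyp
          exact hy0 (this ▸ hp)
      have hsucc : (xs : ℕ) = (pred : ℕ) + 1 := by
        have hpv : (pred : ℕ) = (xs : ℕ) - 1 := rfl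
        omega
      set Q := insert pred (P.erase xs) with hQ
      have hprednE : pred ∉ P.erase xs := fun h => hpredP (Finset.mem_of_mem_erase h)
      have hkpos : 0 < k := by
        rw [← hk]
        exact Finset.card_pos.mpr ⟨x0, hx0⟩
      have hQk : Q.card = k := by
        rw [hQ, Finset.card_insert_of_notMem hprednE, Finset.card_erase_of_mem hxsP, hk]
        omega
      have hQq : Qᶜ.card = q := by
        rw [Finset.card_compl, hQk]
        rw [Finset.card_compl, hk] at hq
        exact hq
      have hQsum : (∑ x ∈ Q, (x : ℕ)) + 1 = N := by
        rw [hQ, Finset.sum_insert hprednE, ← hN, ← Finset.add_sum_erase _ _ hxsP]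
        have hpv : (pred : ℕ) = (xs : ℕ) - 1 := rfl
        omega
      have hPQ : P = insert xs (Q.erase pred) := by
        rw [hQ, Finset.erase_insert hprednE, Finset.insert_erase hxsP]
      have hxsQ : xs ∉ Q := by
        rw [hQ, Finset.mem_insert]
        rintro (h | h)
        · rw [h] at hsucc; omega
        · exact absurd (Finset.mem_of_mem_erase h) (fun _ => (Finset.notMem_erase xs P) h)
      have hk2 : (insert xs (Q.erase pred)).card = k := by rw [← hPQ]; exact hk
      have hq2 : (insert xs (Q.erase pred))ᶜ.card = q := by rw [← hPQ]; exact hq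
      have hshift := AEq_shift Q pred xs (Finset.mem_insert_self _ _) hxsQ hsucc hQk hQq hk2 hq2
      have hcc : cPerm hkq P hk hq = (cPerm hkq Q hQk hQq).trans (Equiv.swap pred xs) := by
        apply Equiv.ext
        intro x
        show AEq P hk hq ((wEquiv hkq).symm x) = _
        rw [AEq_congr hPQ hk hq hk2 hq2, hshift]
        rfl
      have hne : pred ≠ xs := fun h => by rw [h] at hsucc; omega
      have hsign : Equiv.Perm.sign (cPerm hkq P hk hq)
          = -Equiv.Perm.sign (cPerm hkq Q hQk hQq) := by
        rw [hcc]
        rw [show (cPerm hkq Q hQk hQq).trans (Equiv.swap pred xs)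
          = Equiv.swap pred xs * cPerm hkq Q hQk hQq from rfl]
        rw [map_mul, Equiv.Perm.sign_swap hne, neg_one_mul]
      have hQN : (∑ x ∈ Q, (x : ℕ)) < N := by omega
      rw [hsign, ih _ hQN Q hQk hQq rfl]
      rw [show N = (∑ x ∈ Q, (x : ℕ)) + 1 from hQsum.symm]
      rw [show (∑ x ∈ Q, (x : ℕ)) + 1 + ∑ i ∈ Finset.range k, i
        = ((∑ x ∈ Q, (x : ℕ)) + ∑ i ∈ Finset.range k, i) + 1 from by omega]
      rw [pow_succ, mul_neg_one]

end L62

namespace L62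

variable {s : ℕ}

lemma epsSign_eq (I K : Finset (Fin s)) (h : I.card = K.card) :
    epsSign s I K = (-1 : ℤ) ^ ((∑ x ∈ I, (x : ℕ)) + ∑ x ∈ K, (x : ℕ)) := by
  unfold epsSign
  rw [Finset.sum_add_distrib, Finset.sum_add_distrib]
  simp only [Finset.sum_const, smul_eq_mul, mul_one]
  rw [show (∑ x ∈ I, (x : ℕ)) + I.card + ((∑ x ∈ K, (x : ℕ)) + K.card)
      = ((∑ x ∈ I, (x : ℕ)) + ∑ x ∈ K, (x : ℕ)) + (I.card + K.card) from by ring]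
  rw [pow_add, h, ← two_mul, pow_mul]
  norm_num

section Laplace

variable {R' : Type*} [CommRing R']

theorem laplace (M : Matrix (Fin s) (Fin s) R') (K : Finset (Fin s)) :
    M.det = ∑ I ∈ Finset.powersetCard K.card Finset.univ,
      epsSign s I K • (subdet M I K * subdet M Iᶜ Kᶜ) := by
  classical
  have hkq : K.card + Kᶜ.card = s := by
    rw [Finset.card_add_card_compl, Fintype.card_fin]
  rw [Matrix.det_apply']
  rw [← Finset.sum_fiberwise_of_maps_to
    (g := fun σ : Equiv.Perm (Fin s) => Finset.image σ K)
    (t := Finset.powersetCard K.card Finset.univ)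
    (fun σ _ => by
      rw [Finset.mem_powersetCard_univ, Finset.card_image_of_injective _ σ.injective])]
  apply Finset.sum_congr rfl
  intro I hI
  have hIk : I.card = K.card := Finset.mem_powersetCard_univ.mp hI
  have hIq : Iᶜ.card = Kᶜ.card := by
    rw [Finset.card_compl, Fintype.card_fin, hIk, Finset.card_compl, Fintype.card_fin]
  set AKe := AEq K rfl rfl with hAKe
  set AIe := AEq I hIk hIq with hAIe
  set Θ : Equiv.Perm (Fin K.card) × Equiv.Perm (Fin Kᶜ.card) → Equiv.Perm (Fin s) :=
    fun pr => (AKe.symm.trans ((Equiv.sumCongr pr.1 pr.2).trans AIe)) with hΘ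
  have F1 : ∀ pr (b : Fin K.card), Θ pr (K.orderEmbOfFin rfl b) = I.orderEmbOfFin hIk (pr.1 b) := by
    intro pr b
    show AIe ((Equiv.sumCongr pr.1 pr.2) (AKe.symm (K.orderEmbOfFin rfl b))) = _
    rw [show (K.orderEmbOfFin rfl b : Fin s) = AKe (Sum.inl b) from (AEq_inl K rfl rfl b).symm]
    rw [Equiv.symm_apply_apply, Equiv.sumCongr_apply, Sum.map_inl, hAIe, AEq_inl]
  have F2 : ∀ pr (v : Fin Kᶜ.card), Θ pr (Kᶜ.orderEmbOfFin rfl v)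
      = Iᶜ.orderEmbOfFin hIq (pr.2 v) := by
    intro pr v
    show AIe ((Equiv.sumCongr pr.1 pr.2) (AKe.symm (Kᶜ.orderEmbOfFin rfl v))) = _
    rw [show (Kᶜ.orderEmbOfFin rfl v : Fin s) = AKe (Sum.inr v) from (AEq_inr K rfl rfl v).symm]
    rw [Equiv.symm_apply_apply, Equiv.sumCongr_apply, Sum.map_inr, hAIe, AEq_inr]
  have F3 : ∀ pr, Finset.image (Θ pr) K = I := by
    intro pr
    apply Finset.eq_of_subset_of_card_le
    · intro x hx
      obtain ⟨j, hj, rfl⟩ := Finset.mem_image.mp hx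
      obtain ⟨b, rfl⟩ : ∃ b, (K.orderEmbOfFin rfl) b = j :=
        ⟨(K.orderIsoOfFin rfl).symm ⟨j, hj⟩, by
          rw [← Finset.coe_orderIsoOfFin_apply, OrderIso.apply_symm_apply]⟩
      rw [F1]
      exact Finset.orderEmbOfFin_mem _ _ _
    · rw [hIk, Finset.card_image_of_injective _ (Θ pr).injective]
  -- sign computation
  have hsignΘ : ∀ pr, ((Equiv.Perm.sign (Θ pr) : ℤˣ) : ℤ)
      = epsSign s I K * ((Equiv.Perm.sign pr.1 : ℤˣ) : ℤ) * ((Equiv.Perm.sign pr.2 : ℤˣ) : ℤ) := by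
    intro pr
    have hθ2 : Θ pr = (Equiv.permCongr AKe (Equiv.sumCongr pr.1 pr.2)).trans
        (AKe.symm.trans AIe) := by
      apply Equiv.ext
      intro x
      simp [hΘ, Equiv.permCongr_apply, Equiv.symm_apply_apply]
    have hτ : AKe.symm.trans AIe
        = ((cPerm hkq K rfl rfl).symm.trans (cPerm hkq I hIk hIq) : Equiv.Perm (Fin s)) := by
      apply Equiv.ext
      intro x
      simp [cPerm, hAKe, hAIe, Equiv.symm_apply_apply]
    have hmul : Θ pr = (AKe.symm.trans AIe) * (Equiv.permCongr AKe (Equiv.sumCongr pr.1 pr.2)) := by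
      rw [hθ2]; rfl
    rw [hmul, map_mul, hτ]
    have hmul2 : (cPerm hkq K rfl rfl).symm.trans (cPerm hkq I hIk hIq)
        = (cPerm hkq I hIk hIq) * (cPerm hkq K rfl rfl)⁻¹ := rfl
    rw [hmul2, map_mul, map_inv]
    rw [sign_cPerm_aux hkq _ I hIk hIq rfl, sign_cPerm_aux hkq _ K rfl rfl rfl]
    rw [Equiv.Perm.sign_permCongr, Equiv.Perm.sign_sumCongr]
    rw [epsSign_eq I K hIk]
    rw [Int.units_inv_eq_self]
    push_cast
    rw [← pow_add]
    rw [show (∑ x ∈ I, (x : ℕ)) + (∑ i ∈ Finset.range K.card, i)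
        + ((∑ x ∈ K, (x : ℕ)) + (∑ i ∈ Finset.range K.card, i))
        = ((∑ x ∈ I, (x : ℕ)) + (∑ x ∈ K, (x : ℕ)))
          + 2 * (∑ i ∈ Finset.range K.card, i) from by ring]
    rw [pow_add, pow_mul, neg_one_sq, one_pow, mul_one, mul_assoc]
  have hbij := Finset.sum_bij
    (i := fun (pr : Equiv.Perm (Fin K.card) × Equiv.Perm (Fin Kᶜ.card))
      (_ : pr ∈ (Finset.univ : Finset _)) => Θ pr)
    (t := Finset.univ.filter (fun σ : Equiv.Perm (Fin s) => Finset.image σ K = I))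
    (f := fun pr => (((Equiv.Perm.sign (Θ pr) : ℤˣ) : ℤ) : R') * ∏ i, M (Θ pr i) i)
    (g := fun σ => (((Equiv.Perm.sign σ : ℤˣ) : ℤ) : R') * ∏ i, M (σ i) i)
    (fun pr _ => Finset.mem_filter.mpr ⟨Finset.mem_univ _, F3 pr⟩)
    (fun pr1 _ pr2 _ h => by
      have h' : Θ pr1 = Θ pr2 := h
      have h1 : pr1.1 = pr2.1 := by
        apply Equiv.ext
        intro b
        have hb : Θ pr1 (K.orderEmbOfFin rfl b) = Θ pr2 (K.orderEmbOfFin rfl b) := by rw [h']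
        rw [F1, F1] at hb
        exact (I.orderEmbOfFin hIk).injective hb
      have h2 : pr1.2 = pr2.2 := by
        apply Equiv.ext
        intro v
        have hb : Θ pr1 (Kᶜ.orderEmbOfFin rfl v) = Θ pr2 (Kᶜ.orderEmbOfFin rfl v) := by rw [h']
        rw [F2, F2] at hb
        exact (Iᶜ.orderEmbOfFin hIq).injective hb
      exact Prod.ext h1 h2)
    (fun σ hσ => by
      have himg : Finset.image σ K = I := (Finset.mem_filter.mp hσ).2
      have hmemI : ∀ b : Fin K.card, σ (K.orderEmbOfFin rfl b) ∈ I := fun b => by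
        rw [← himg]
        exact Finset.mem_image_of_mem σ (Finset.orderEmbOfFin_mem _ _ _)
      have hmemIc : ∀ v : Fin Kᶜ.card, σ (Kᶜ.orderEmbOfFin rfl v) ∈ Iᶜ := fun v => by
        rw [Finset.mem_compl]
        intro hmem
        rw [← himg] at hmem
        obtain ⟨j, hj, hj2⟩ := Finset.mem_image.mp hmem
        have hjv : j = Kᶜ.orderEmbOfFin rfl v := σ.injective hj2
        exact (Finset.mem_compl.mp (Finset.orderEmbOfFin_mem Kᶜ rfl v)) (hjv ▸ hj)
      have hπinj : Function.Injective (fun b : Fin K.card =>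
          (I.orderIsoOfFin hIk).symm ⟨σ (K.orderEmbOfFin rfl b), hmemI b⟩) := by
        intro a b hab
        have h2 := congrArg (fun z => ((I.orderIsoOfFin hIk) z : Fin s)) hab
        simp only [OrderIso.apply_symm_apply] at h2
        exact (K.orderEmbOfFin rfl).injective (σ.injective h2)
      have hρinj : Function.Injective (fun v : Fin Kᶜ.card =>
          (Iᶜ.orderIsoOfFin hIq).symm ⟨σ (Kᶜ.orderEmbOfFin rfl v), hmemIc v⟩) := by
        intro a b hab
        have h2 := congrArg (fun z => ((Iᶜ.orderIsoOfFin hIq) z : Fin s)) hab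
        simp only [OrderIso.apply_symm_apply] at h2
        exact (Kᶜ.orderEmbOfFin rfl).injective (σ.injective h2)
      refine ⟨(Equiv.ofBijective _ (Finite.injective_iff_bijective.mp hπinj),
               Equiv.ofBijective _ (Finite.injective_iff_bijective.mp hρinj)),
               Finset.mem_univ _, ?_⟩
      apply Equiv.ext
      intro x
      obtain ⟨z, rfl⟩ : ∃ z, AKe z = x := ⟨AKe.symm x, Equiv.apply_symm_apply _ _⟩
      cases z with
      | inl b =>
          rw [show AKe (Sum.inl b) = (K.orderEmbOfFin rfl b : Fin s) from AEq_inl K rfl rfl b, F1]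
          show (I.orderEmbOfFin hIk)
            ((I.orderIsoOfFin hIk).symm ⟨σ (K.orderEmbOfFin rfl b), hmemI b⟩) = _
          rw [← Finset.coe_orderIsoOfFin_apply, OrderIso.apply_symm_apply]
      | inr v =>
          rw [show AKe (Sum.inr v) = (Kᶜ.orderEmbOfFin rfl v : Fin s) from AEq_inr K rfl rfl v, F2]
          show (Iᶜ.orderEmbOfFin hIq)
            ((Iᶜ.orderIsoOfFin hIq).symm ⟨σ (Kᶜ.orderEmbOfFin rfl v), hmemIc v⟩) = _
          rw [← Finset.coe_orderIsoOfFin_apply, OrderIso.apply_symm_apply])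
    (fun pr _ => rfl)
  rw [← hbij]
  have htm : ∀ pr : Equiv.Perm (Fin K.card) × Equiv.Perm (Fin Kᶜ.card),
      (((Equiv.Perm.sign (Θ pr) : ℤˣ) : ℤ) : R') * ∏ i, M (Θ pr i) i
      = ((epsSign s I K : ℤ) : R') *
        ((((Equiv.Perm.sign pr.1 : ℤˣ) : ℤ) : R') *
          ∏ b, M (I.orderEmbOfFin hIk (pr.1 b)) (K.orderEmbOfFin rfl b)) *
        ((((Equiv.Perm.sign pr.2 : ℤˣ) : ℤ) : R') *
          ∏ v, M (Iᶜ.orderEmbOfFin hIq (pr.2 v)) (Kᶜ.orderEmbOfFin rfl v)) := by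
    intro pr
    have hprod : (∏ i, M (Θ pr i) i)
        = (∏ b, M (I.orderEmbOfFin hIk (pr.1 b)) (K.orderEmbOfFin rfl b))
          * (∏ v, M (Iᶜ.orderEmbOfFin hIq (pr.2 v)) (Kᶜ.orderEmbOfFin rfl v)) := by
      rw [← Equiv.prod_comp AKe (fun i => M (Θ pr i) i), Fintype.prod_sum_type]
      congr 1
      · apply Finset.prod_congr rfl
        intro b _
        rw [show AKe (Sum.inl b) = (K.orderEmbOfFin rfl b : Fin s) from AEq_inl K rfl rfl b, F1]
      · apply Finset.prod_congr rfl
        intro v _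
        rw [show AKe (Sum.inr v) = (Kᶜ.orderEmbOfFin rfl v : Fin s) from AEq_inr K rfl rfl v, F2]
    have hsgn : (((Equiv.Perm.sign (Θ pr) : ℤˣ) : ℤ) : R')
        = ((epsSign s I K : ℤ) : R') * (((Equiv.Perm.sign pr.1 : ℤˣ) : ℤ) : R')
          * (((Equiv.Perm.sign pr.2 : ℤˣ) : ℤ) : R') := by
      rw [← Int.cast_mul, ← Int.cast_mul, ← hsignΘ pr]
    rw [hprod, hsgn]
    ring
  rw [Finset.sum_congr rfl (fun pr _ => htm pr)]
  rw [Fintype.sum_prod_type]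
  have hXdet : (∑ π : Equiv.Perm (Fin K.card),
      (((Equiv.Perm.sign π : ℤˣ) : ℤ) : R') *
        ∏ b, M (I.orderEmbOfFin hIk (π b)) (K.orderEmbOfFin rfl b))
      = subdet M I K := by
    rw [subdet_eq M I K hIk rfl, Matrix.det_apply']
    rfl
  have hYdet : (∑ ρ : Equiv.Perm (Fin Kᶜ.card),
      (((Equiv.Perm.sign ρ : ℤˣ) : ℤ) : R') *
        ∏ v, M (Iᶜ.orderEmbOfFin hIq (ρ v)) (Kᶜ.orderEmbOfFin rfl v))
      = subdet M Iᶜ Kᶜ := by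
    rw [subdet_eq M Iᶜ Kᶜ hIq rfl, Matrix.det_apply']
    rfl
  simp only [← Finset.mul_sum]
  rw [← Finset.sum_mul, ← Finset.mul_sum]
  rw [hXdet, hYdet, zsmul_eq_mul, mul_assoc]

end Laplace

end L62

namespace L62

variable {s : ℕ}

/-- double power series ring: outer variable `t`, inner variable `u`. -/
abbrev R2 (s : ℕ) := PowerSeries (PowerSeries (PolyS s))

/-- Taylor in the outer variable `t` on all rows. -/
noncomputable def phiT (s : ℕ) : PolyS s →+* R2 s :=
  (PowerSeries.map (PowerSeries.C (R := PolyS s))).comp (Psi (Finset.univ : Finset (Fin s))).toRingHom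

/-- constant in `t`, Taylor in the inner variable `u` on rows `T`. -/
noncomputable def phiU (s : ℕ) (T : Finset (Fin s)) : PolyS s →+* R2 s :=
  (PowerSeries.C (R := PowerSeries (PolyS s))).comp (Psi T).toRingHom

/-- doubly-constant embedding. -/
noncomputable def ccEmb (s : ℕ) : PolyS s →+* R2 s :=
  (PowerSeries.C (R := PowerSeries (PolyS s))).comp (PowerSeries.C (R := PolyS s))

lemma coeff_coeff_mul (T : Finset (Fin s)) (f h : PolyS s) (a b : ℕ) :
    PowerSeries.coeff (R := PolyS s) b (PowerSeries.coeff (R := PowerSeries (PolyS s)) a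
        (phiT s f * phiU s T h))
      = PowerSeries.coeff (R := PolyS s) a (Psi Finset.univ f)
        * PowerSeries.coeff (R := PolyS s) b (Psi T h) := by
  rw [show phiT s f * phiU s T h = phiU s T h * phiT s f from mul_comm _ _]
  rw [phiT, phiU]
  simp only [RingHom.comp_apply, AlgHom.toRingHom_eq_coe, RingHom.coe_coe]
  rw [PowerSeries.coeff_C_mul, PowerSeries.coeff_map]
  rw [show (Psi T h) * PowerSeries.C (R := PolyS s)
      (PowerSeries.coeff (R := PolyS s) a (Psi Finset.univ f))
      = PowerSeries.C (R := PolyS s) (PowerSeries.coeff (R := PolyS s) a (Psi Finset.univ f))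
        * Psi T h from mul_comm _ _]
  rw [PowerSeries.coeff_C_mul]

lemma coeff_phiT_X (v : Fin s × Fin s × ℕ) (hv : v.2.2 = 0) (n : ℕ) :
    PowerSeries.coeff (R := PowerSeries (PolyS s)) n (phiT s (X v))
      = PowerSeries.C (R := PolyS s) (X (v.1, v.2.1, n)) := by
  rw [phiT]
  simp only [RingHom.comp_apply, AlgHom.toRingHom_eq_coe, RingHom.coe_coe]
  rw [PowerSeries.coeff_map]
  congr 1
  rw [Psi_X, tay, if_pos (Finset.mem_univ _), PowerSeries.coeff_mk, hv]
  simp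

lemma card_filter_le_sum (p : ℕ) (l : Fin p → ℕ) :
    (Finset.univ.filter fun q => l q ≠ 0).card ≤ ∑ q, l q := by
  calc (Finset.univ.filter fun q => l q ≠ 0).card
      = ∑ q ∈ Finset.univ.filter (fun q => l q ≠ 0), 1 := by
        rw [Finset.card_eq_sum_ones]
    _ ≤ ∑ q ∈ Finset.univ.filter (fun q => l q ≠ 0), l q := by
        apply Finset.sum_le_sum
        intro i hi
        have := (Finset.mem_filter.mp hi).2
        omega
    _ ≤ ∑ q, l q := Finset.sum_le_sum_of_subset (Finset.filter_subset _ _)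

lemma coeff_coeff_det_mem_base (p : ℕ) (V : Matrix (Fin p) (Fin p) (R2 s))
    (ri cj : Fin p → Fin s)
    (hV : ∀ j : Fin p, (∀ i, V i j = phiT s (X (ri i, cj j, 0))) ∨
                       (∀ i, V i j = ccEmb s (X (ri i, cj j, 0))))
    (a b : ℕ) :
    PowerSeries.coeff (R := PolyS s) b (PowerSeries.coeff (R := PowerSeries (PolyS s)) a V.det)
      ∈ minorIdealS s (p - a) := by
  classical
  rw [Matrix.det_apply]
  simp only [Units.smul_def]
  rw [map_sum]
  simp only [map_zsmul]
  simp only [PowerSeries.coeff_prod]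
  rw [map_sum]
  simp only [map_zsmul, map_sum, Finset.smul_sum]
  rw [Finset.sum_comm]
  apply Ideal.sum_mem
  intro l hl
  set colT : Fin p → Prop := fun j => ∀ i, V i j = phiT s (X (ri i, cj j, 0)) with hcolT
  set y : Equiv.Perm (Fin p) → Fin p → PolyS s := fun σ i =>
    if colT i ∨ l i = 0 then (X (ri (σ i), cj i, l i) : PolyS s) else 0 with hy
  have hyE : ∀ (σ : Equiv.Perm (Fin p)) (i : Fin p), (colT i ∨ l i = 0) →
      y σ i = X (ri (σ i), cj i, l i) := by
    intro σ i h
    simp only [hy]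
    exact if_pos h
  have hyN : ∀ (σ : Equiv.Perm (Fin p)) (i : Fin p), ¬(colT i ∨ l i = 0) →
      y σ i = 0 := by
    intro σ i h
    simp only [hy]
    exact if_neg h
  have hfac : ∀ (σ : Equiv.Perm (Fin p)) (i : Fin p),
      PowerSeries.coeff (R := PowerSeries (PolyS s)) (l i) (V (σ i) i)
        = PowerSeries.C (R := PolyS s) (y σ i) := by
    intro σ i
    by_cases hc : colT i
    · rw [hc (σ i), coeff_phiT_X _ rfl, hyE σ i (Or.inl hc)]
    · have hcc := (hV i).resolve_left hc
      rw [hcc (σ i), ccEmb]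
      simp only [RingHom.comp_apply]
      rw [PowerSeries.coeff_C]
      by_cases hli : l i = 0
      · rw [if_pos hli, hyE σ i (Or.inr hli), hli]
      · rw [if_neg hli, hyN σ i (by push_neg; exact ⟨hc, hli⟩), map_zero]
  have hProd : ∀ σ : Equiv.Perm (Fin p),
      (∏ i, PowerSeries.coeff (R := PowerSeries (PolyS s)) (l i) (V (σ i) i))
        = PowerSeries.C (R := PolyS s) (∏ i, y σ i) := by
    intro σ
    rw [Finset.prod_congr rfl (fun i _ => hfac σ i), map_prod]
  simp only [hProd, PowerSeries.coeff_C]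
  by_cases hb : b = 0
  · simp only [if_pos hb]
    by_cases hbad : ∃ i0, ¬ (colT i0 ∨ l i0 = 0)
    · obtain ⟨i0, hbad0⟩ := hbad
      have hzero : ∀ σ : Equiv.Perm (Fin p), (∏ i, y σ i) = 0 := fun σ =>
        Finset.prod_eq_zero (Finset.mem_univ i0) (hyN σ i0 hbad0)
      simp only [hzero, smul_zero, Finset.sum_const_zero]
      exact Ideal.zero_mem _
    · push_neg at hbad
      have hyX : ∀ (σ : Equiv.Perm (Fin p)) (i : Fin p),
          y σ i = X (ri (σ i), cj i, l i) := fun σ i => hyE σ i (hbad i)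
      simp only [hyX]
      have hdet : (∑ σ : Equiv.Perm (Fin p),
          ((Equiv.Perm.sign σ : ℤˣ) : ℤ) • ∏ i, (X (ri (σ i), cj i, l i) : PolyS s))
          = (Matrix.of fun i q : Fin p => (X (ri i, cj q, l q) : PolyS s)).det := by
        rw [Matrix.det_apply]
        simp only [Units.smul_def]
        rfl
      rw [hdet]
      apply det_X_mem p (p - a) ri cj (fun q => l q)
      have h1 : (Finset.univ.filter fun q => l q ≠ 0).card ≤ ∑ q, l q :=
        card_filter_le_sum p (fun q => l q)
      have h2 : ∑ q, l q = a := by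
        have := (Finset.mem_finsuppAntidiag.mp hl).1
        exact this
      have h3 : (Finset.univ.filter fun q : Fin p => l q ≠ 0).card ≤ p := by
        calc (Finset.univ.filter fun q : Fin p => l q ≠ 0).card
            ≤ Finset.univ.card := Finset.card_filter_le _ _
          _ = p := by simp
      omega
  · simp only [if_neg hb, smul_zero, Finset.sum_const_zero]
    exact Ideal.zero_mem _

end L62

namespace L62

variable {s : ℕ}

lemma coeff_coeff_det_mem :
    ∀ (p : ℕ) (V : Matrix (Fin p) (Fin p) (R2 s)) (Rs : Finset (Fin p))
      (ri cj : Fin p → Fin s),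
      (∀ j : Fin p, (∀ i, i ∉ Rs → V i j = phiT s (X (ri i, cj j, 0))) ∨
                    (∀ i, i ∉ Rs → V i j = ccEmb s (X (ri i, cj j, 0)))) →
      ∀ a b : ℕ,
        PowerSeries.coeff (R := PolyS s) b (PowerSeries.coeff (R := PowerSeries (PolyS s)) a V.det)
          ∈ minorIdealS s (p - Rs.card - a) := by
  intro p
  induction p with
  | zero =>
      intro V Rs ri cj hV a b
      have h0 : (0 : ℕ) - Rs.card - a = 0 := by omega
      rw [h0, minorIdeal_zero_eq_top]
      exact Submodule.mem_top
  | succ n ih =>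
      intro V Rs ri cj hV a b
      rcases Finset.eq_empty_or_nonempty Rs with hRse | ⟨r, hr⟩
      · subst hRse
        have hV' : ∀ j : Fin (n+1), (∀ i, V i j = phiT s (X (ri i, cj j, 0))) ∨
            (∀ i, V i j = ccEmb s (X (ri i, cj j, 0))) := by
          intro j
          rcases hV j with hc | hc
          · exact Or.inl (fun i => hc i (by simp))
          · exact Or.inr (fun i => hc i (by simp))
        have hbase := coeff_coeff_det_mem_base (n+1) V ri cj hV' a b
        simpa using hbase
      · rw [Matrix.det_succ_row _ r, map_sum, map_sum]
        apply Ideal.sum_mem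
        intro j _
        set W := V.submatrix r.succAbove j.succAbove with hW
        set Rs' := Finset.univ.filter (fun i : Fin n => r.succAbove i ∈ Rs) with hRs'
        have hcard : Rs'.card + 1 = Rs.card := by
          have himg : Rs'.image r.succAbove = Rs.erase r := by
            ext x
            simp only [Finset.mem_image, hRs', Finset.mem_filter, Finset.mem_univ, true_and,
              Finset.mem_erase]
            constructor
            · rintro ⟨i, hi, rfl⟩
              exact ⟨Fin.succAbove_ne r i, hi⟩
            · rintro ⟨hx, hxm⟩
              obtain ⟨i, rfl⟩ := Fin.exists_succAbove_eq hx
              exact ⟨i, hxm, rfl⟩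
          have h1 : Rs'.card = (Rs.erase r).card := by
            rw [← himg, Finset.card_image_of_injective _ Fin.succAbove_right_injective]
          rw [h1, Finset.card_erase_of_mem hr]
          have : 0 < Rs.card := Finset.card_pos.mpr ⟨r, hr⟩
          omega
        have hV' : ∀ j' : Fin n,
            (∀ i', i' ∉ Rs' →
              W i' j' = phiT s (X (ri (r.succAbove i'), cj (j.succAbove j'), 0))) ∨
            (∀ i', i' ∉ Rs' →
              W i' j' = ccEmb s (X (ri (r.succAbove i'), cj (j.succAbove j'), 0))) := by
          intro j'
          rcases hV (j.succAbove j') with hc | hc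
          · refine Or.inl fun i' hi' => ?_
            have hnm : r.succAbove i' ∉ Rs := by
              intro hmem
              exact hi' (by rw [hRs']; simp [hmem])
            exact hc _ hnm
          · refine Or.inr fun i' hi' => ?_
            have hnm : r.succAbove i' ∉ Rs := by
              intro hmem
              exact hi' (by rw [hRs']; simp [hmem])
            exact hc _ hnm
        have hterm : ((-1 : R2 s) ^ ((r : ℕ) + (j : ℕ)) * V r j * W.det)
            = ((-1 : ℤ) ^ ((r : ℕ) + (j : ℕ))) • (V r j * W.det) := by
          rw [zsmul_eq_mul]
          push_cast
          ring
        rw [hterm, map_zsmul, map_zsmul, zsmul_eq_mul]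
        apply Ideal.mul_mem_left
        rw [PowerSeries.coeff_mul, map_sum]
        apply Ideal.sum_mem
        intro pq hpq
        rw [PowerSeries.coeff_mul]
        apply Ideal.sum_mem
        intro qq _
        apply Ideal.mul_mem_left
        have hmem := ih W Rs' (fun i' => ri (r.succAbove i'))
          (fun j' => cj (j.succAbove j')) hV' pq.2 qq.2
        have hple : pq.2 ≤ a := by
          have := Finset.HasAntidiagonal.mem_antidiagonal.mp hpq
          omega
        exact minorIdeal_mono (by omega) hmem

end L62

namespace L62

variable {s : ℕ}

lemma phiU_X_not_mem (T : Finset (Fin s)) (v : Fin s × Fin s × ℕ) (hv : v.1 ∉ T) :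
    phiU s T (X v) = ccEmb s (X v) := by
  rw [phiU, ccEmb]
  simp only [RingHom.comp_apply, AlgHom.toRingHom_eq_coe, RingHom.coe_coe]
  rw [Psi_X, tay, if_neg hv]

end L62

open L62

/-- Lemma 6.2: for `T, J, K ⊆ S` with `J ∩ T = ∅` and `0 ≤ a ≤ l`,
`Σ_{|I|=|K|, J ⊆ I ⊆ S∖T} ε(I,K) ∂̄^a 𝒜(I,K) · ∂̄_T^{l−a} 𝒜(S∖I, S∖K)`
lies in `𝔯[s − |J| − |T| − a]` (stated in factorial-cleared form). -/
theorem mixed_derivative_sum_in_minorIdeal (s a l : ℕ) (T J K : Finset (Fin s))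
    (hJT : Disjoint J T) (hal : a ≤ l)
    (g : PolyS s)
    (hg : ((a.factorial * (l - a).factorial : ℕ) : ℤ) • g =
      ∑ I ∈ (Finset.powersetCard K.card Tᶜ).filter (fun I => J ⊆ I),
        epsSign s I K •
          ((⇑(dFull s))^[a] (minorA s I K) *
           (⇑(dRowSet s T))^[l - a] (minorA s Iᶜ Kᶜ))) :
    g ∈ minorIdealS s (s - J.card - T.card - a) := by
  classical
  set FS := (Finset.powersetCard K.card Tᶜ).filter (fun I => J ⊆ I) with hFS
  -- the key matrix over the double power series ring
  set N : Matrix (Fin s) (Fin s) (R2 s) := Matrix.of fun i j =>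
    if j ∈ K then (if i ∈ T then 0 else phiT s (X (i, j, 0)))
    else (if i ∈ J then 0 else phiU s T (X (i, j, 0))) with hN
  have hFSmem : ∀ I, I ∈ FS ↔ I.card = K.card ∧ I ⊆ Tᶜ ∧ J ⊆ I := by
    intro I
    rw [hFS, Finset.mem_filter, Finset.mem_powersetCard]
    tauto
  -- identification of the determinant as the constrained Laplace sum
  have hNdet : N.det = ∑ I ∈ FS,
      epsSign s I K • (phiT s (minorA s I K) * phiU s T (minorA s Iᶜ Kᶜ)) := by
    rw [laplace N K]
    have hsub : FS ⊆ Finset.powersetCard K.card Finset.univ := by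
      intro I hI
      rw [Finset.mem_powersetCard_univ]
      exact ((hFSmem I).mp hI).1
    rw [← Finset.sum_subset hsub ?hvan]
    case hvan =>
      intro I hIbig hInot
      have hIk : I.card = K.card := Finset.mem_powersetCard_univ.mp hIbig
      have hcases : (¬ I ⊆ Tᶜ) ∨ (¬ J ⊆ I) := by
        by_contra hcon
        push_neg at hcon
        exact hInot ((hFSmem I).mpr ⟨hIk, hcon.1, hcon.2⟩)
      rcases hcases with hbad | hbad
      · obtain ⟨i0, hi0I, hi0T⟩ : ∃ i0 ∈ I, i0 ∈ T := by
          by_contra hcon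
          push_neg at hcon
          exact hbad (fun x hx => Finset.mem_compl.mpr (hcon x hx))
        have hz : subdet N I K = 0 := by
          rw [subdet_eq N I K hIk rfl]
          apply Matrix.det_eq_zero_of_row_eq_zero ((I.orderIsoOfFin hIk).symm ⟨i0, hi0I⟩)
          intro b
          have hrow : I.orderEmbOfFin hIk ((I.orderIsoOfFin hIk).symm ⟨i0, hi0I⟩) = i0 := by
            rw [← Finset.coe_orderIsoOfFin_apply, OrderIso.apply_symm_apply]
          rw [Matrix.of_apply, hrow, hN]
          simp only [Matrix.of_apply]
          rw [if_pos (Finset.orderEmbOfFin_mem K rfl b), if_pos hi0T]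
        rw [hz, zero_mul, smul_zero]
      · obtain ⟨j0, hj0J, hj0I⟩ : ∃ j0 ∈ J, j0 ∉ I := by
          by_contra hcon
          push_neg at hcon
          exact hbad hcon
        have hIck : Iᶜ.card = Kᶜ.card := by
          rw [Finset.card_compl, Fintype.card_fin, hIk, Finset.card_compl, Fintype.card_fin]
        have hz : subdet N Iᶜ Kᶜ = 0 := by
          rw [subdet_eq N Iᶜ Kᶜ hIck rfl]
          apply Matrix.det_eq_zero_of_row_eq_zero
            ((Iᶜ.orderIsoOfFin hIck).symm ⟨j0, Finset.mem_compl.mpr hj0I⟩)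
          intro b
          have hrow : Iᶜ.orderEmbOfFin hIck
              ((Iᶜ.orderIsoOfFin hIck).symm ⟨j0, Finset.mem_compl.mpr hj0I⟩) = j0 := by
            rw [← Finset.coe_orderIsoOfFin_apply, OrderIso.apply_symm_apply]
          rw [Matrix.of_apply, hrow, hN]
          simp only [Matrix.of_apply]
          rw [if_neg (Finset.mem_compl.mp (Finset.orderEmbOfFin_mem Kᶜ rfl b)), if_pos hj0J]
        rw [hz, mul_zero, smul_zero]
    · apply Finset.sum_congr rfl
      intro I hI
      obtain ⟨hIk, hIT, hJI⟩ := (hFSmem I).mp hI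
      have hIck : Iᶜ.card = Kᶜ.card := by
        rw [Finset.card_compl, Fintype.card_fin, hIk, Finset.card_compl, Fintype.card_fin]
      have hsub1 : subdet N I K = phiT s (minorA s I K) := by
        rw [subdet_eq N I K hIk rfl, minorA_eq I K hIk rfl, RingHom.map_det]
        refine congrArg Matrix.det (Matrix.ext fun a' b' => ?_)
        simp only [RingHom.mapMatrix_apply, Matrix.map_apply, Matrix.of_apply, hN]
        rw [if_pos (Finset.orderEmbOfFin_mem K rfl b'),
          if_neg (Finset.mem_compl.mp (hIT (Finset.orderEmbOfFin_mem I hIk a')))]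
      have hsub2 : subdet N Iᶜ Kᶜ = phiU s T (minorA s Iᶜ Kᶜ) := by
        rw [subdet_eq N Iᶜ Kᶜ hIck rfl, minorA_eq Iᶜ Kᶜ hIck rfl, RingHom.map_det]
        refine congrArg Matrix.det (Matrix.ext fun a' b' => ?_)
        simp only [RingHom.mapMatrix_apply, Matrix.map_apply, Matrix.of_apply, hN]
        rw [if_neg (Finset.mem_compl.mp (Finset.orderEmbOfFin_mem Kᶜ rfl b')),
          if_neg (fun hmem => Finset.mem_compl.mp
            (Finset.orderEmbOfFin_mem Iᶜ hIck a') (hJI hmem))]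
      rw [hsub1, hsub2]
  -- extract the coefficient
  set D := PowerSeries.coeff (R := PolyS s) (l - a)
    (PowerSeries.coeff (R := PowerSeries (PolyS s)) a N.det) with hD
  have hDsum : D = ∑ I ∈ FS, epsSign s I K •
      (PowerSeries.coeff (R := PolyS s) a (Psi Finset.univ (minorA s I K))
        * PowerSeries.coeff (R := PolyS s) (l - a) (Psi T (minorA s Iᶜ Kᶜ))) := by
    rw [hD, hNdet, map_sum, map_sum]
    apply Finset.sum_congr rfl
    intro I _
    rw [map_zsmul, map_zsmul, coeff_coeff_mul]
  -- identify g with D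
  have hgD : g = D := by
    apply smul_cancel (mul_ne_zero (Nat.factorial_ne_zero a) (Nat.factorial_ne_zero (l - a)))
    rw [hg, hDsum, Finset.smul_sum]
    apply Finset.sum_congr rfl
    intro I _
    rw [dFull_eq, ← factorial_coeff_Psi Finset.univ a (minorA s I K),
      ← factorial_coeff_Psi T (l - a) (minorA s Iᶜ Kᶜ)]
    push_cast
    rw [smul_comm ((a.factorial : ℤ) * ((l - a).factorial : ℤ)) (epsSign s I K)]
    congr 1
    rw [smul_mul_smul_comm, mul_smul]
  rw [hgD, hD]
  -- apply the membership machine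
  have hmem := coeff_coeff_det_mem s N (J ∪ T) id id ?hcols a (l - a)
  case hcols =>
    intro j
    by_cases hjK : j ∈ K
    · refine Or.inl fun i hi => ?_
      have hiT : i ∉ T := fun h => hi (Finset.mem_union_right _ h)
      rw [hN]
      simp only [Matrix.of_apply, id]
      rw [if_pos hjK, if_neg hiT]
    · refine Or.inr fun i hi => ?_
      have hiJ : i ∉ J := fun h => hi (Finset.mem_union_left _ h)
      have hiT : i ∉ T := fun h => hi (Finset.mem_union_right _ h)
      rw [hN]
      simp only [Matrix.of_apply, id]
      rw [if_neg hjK, if_neg hiJ]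
      exact phiU_X_not_mem T _ hiT
  have hcard : (J ∪ T).card = J.card + T.card := Finset.card_union_of_disjoint hJT
  rw [hcard] at hmem
  have hidx : s - (J.card + T.card) - a = s - J.card - T.card - a := by omega
  rw [hidx] at hmem
  exact hmem
end

section
/- Let G = GL_h(K) act on V = (K^h)^{⊕p} ⊕ ((K^h)^*)^{⊕q}, K algebraically closed. Suppose p, q ≥ h, let Δ be the image under Q_h^K of the h-minor (h,…,1 | 1,…,h), i.e., Δ = det(Σ_l a_{il}^{(0)} b_{jl}^{(0)})_{1 ≤ i,j ≤ h}, and let 𝔅^K_Δ, 𝔠^K_Δ be localizations at Δ of the coordinate ring 𝔅^K of J_∞(V) and of the subring 𝔠^K generated by all X_{ij}^{(k)} = ∂̄^k Σ_l a_{il}^{(0)} b_{jl}^{(0)}. Then the ring of J_∞(GL_h(K))-invariants of 𝔅^K_Δ equals 𝔠^K_Δ. -/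
open MvPolynomial

/-- `𝔅^K = K[a_{il}^{(k)}, b_{jl}^{(k)}]`, the coordinate ring of `J_∞(V)` for
`V = W^{⊕p} ⊕ (W^*)^{⊕q}`, `W = K^h`. -/
abbrev BK (K : Type) [Field K] (p q h : ℕ) :=
  MvPolynomial ((Fin p × Fin h × ℕ) ⊕ (Fin q × Fin h × ℕ)) K

/-- `X_{ij}^{(k)} = ∂̄^k Σ_{l=1}^h a_{il}^{(0)} b_{jl}^{(0)}
  = Σ_l Σ_{k₁+k₂=k} a_{il}^{(k₁)} b_{jl}^{(k₂)}`. -/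
noncomputable def XgenK (K : Type) [Field K] (p q h : ℕ)
    (i : Fin p) (j : Fin q) (k : ℕ) : BK K p q h :=
  ∑ l : Fin h, ∑ m ∈ Finset.HasAntidiagonal.antidiagonal k,
    X (.inl (i, l, m.1)) * X (.inr (j, l, m.2))

/-- Evaluation of `𝔅^K` at an `A[[t]]`-point of `V`, i.e. at an `A`-point of the arc
space `J_∞(V)`: the variable `a_{il}^{(k)}` goes to the `t^k`-coefficient of the arc
`α(i,l)`, and similarly for `b`. -/
noncomputable def evalArc {K : Type} [Field K] {p q h : ℕ}
    {A : Type} [CommRing A] [Algebra K A]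
    (α : Fin p × Fin h → PowerSeries A) (β : Fin q × Fin h → PowerSeries A) :
    BK K p q h →ₐ[K] A :=
  aeval (Sum.elim
    (fun v => PowerSeries.coeff (R := A) v.2.2 (α (v.1, v.2.1)))
    (fun v => PowerSeries.coeff (R := A) v.2.2 (β (v.1, v.2.1))))

/-- The action of `g ∈ J_∞(GL_h)(A) = GL_h(A[[t]])` on the `W`-components. -/
noncomputable def actA {p h : ℕ} {A : Type} [CommRing A]
    (g : GL (Fin h) (PowerSeries A)) (α : Fin p × Fin h → PowerSeries A) :
    Fin p × Fin h → PowerSeries A :=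
  fun v => ∑ m : Fin h, (g : Matrix (Fin h) (Fin h) (PowerSeries A)) v.2 m * α (v.1, m)

/-- The action of `g ∈ GL_h(A[[t]])` on the `W^*`-components (dual action). -/
noncomputable def actB {q h : ℕ} {A : Type} [CommRing A]
    (g : GL (Fin h) (PowerSeries A)) (β : Fin q × Fin h → PowerSeries A) :
    Fin q × Fin h → PowerSeries A :=
  fun v => ∑ m : Fin h, β (v.1, m) * ((g⁻¹ : GL (Fin h) (PowerSeries A)) :
    Matrix (Fin h) (Fin h) (PowerSeries A)) m v.2

/-- `f ∈ 𝔅^K` is invariant under the arc group `J_∞(GL_h(K))`: for every `K`-algebra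
`A`, every `g ∈ GL_h(A[[t]])` and every `A`-point of `J_∞(V)`, evaluating `f` at the
translated point gives the same result. -/
def IsArcInvariant (K : Type) [Field K] (p q h : ℕ) (f : BK K p q h) : Prop :=
  ∀ (A : Type) [CommRing A] [Algebra K A]
    (g : GL (Fin h) (PowerSeries A))
    (α : Fin p × Fin h → PowerSeries A) (β : Fin q × Fin h → PowerSeries A),
    evalArc (K := K) (actA g α) (actB g β) f = evalArc (K := K) α β f

/-- `Δ = det(X_{ij}^{(0)})_{1 ≤ i,j ≤ h}`, the image under `Q_h^K` of the `h`-minor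
`(h,…,1 | 1,…,h)` (defined when `p, q ≥ h`). -/
noncomputable def DeltaK (K : Type) [Field K] (p q h : ℕ) (hp : h ≤ p) (hq : h ≤ q) :
    BK K p q h :=
  (Matrix.of fun i j : Fin h =>
    XgenK K p q h (Fin.castLE hp i) (Fin.castLE hq j) 0).det

namespace ArcAux

variable {K : Type} [Field K] {p q h : ℕ} {A : Type} [CommRing A] [Algebra K A]

/-- the pairing power series `Σ_l α_{il} β_{jl}` -/
noncomputable def pair (α : Fin p × Fin h → PowerSeries A)
    (β : Fin q × Fin h → PowerSeries A) (i : Fin p) (j : Fin q) : PowerSeries A :=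
  ∑ l : Fin h, α (i, l) * β (j, l)

lemma evalArc_Xgen (α : Fin p × Fin h → PowerSeries A) (β : Fin q × Fin h → PowerSeries A)
    (i : Fin p) (j : Fin q) (k : ℕ) :
    evalArc (K := K) α β (XgenK K p q h i j k) = PowerSeries.coeff (R := A) k (pair α β i j) := by
  simp [XgenK, evalArc, pair, PowerSeries.coeff_mul]

lemma pair_act (g : GL (Fin h) (PowerSeries A)) (α : Fin p × Fin h → PowerSeries A)
    (β : Fin q × Fin h → PowerSeries A) (i : Fin p) (j : Fin q) :
    pair (actA g α) (actB g β) i j = pair α β i j := by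
  have hkey : ∀ n m : Fin h,
      (∑ l : Fin h, ((g⁻¹ : GL (Fin h) (PowerSeries A)) : Matrix (Fin h) (Fin h) (PowerSeries A)) n l *
        (g : Matrix (Fin h) (Fin h) (PowerSeries A)) l m) = if n = m then 1 else 0 := by
    intro n m
    rw [← Matrix.mul_apply]
    have : ((g⁻¹ : GL (Fin h) (PowerSeries A)) : Matrix (Fin h) (Fin h) (PowerSeries A)) *
        (g : Matrix (Fin h) (Fin h) (PowerSeries A)) = 1 := g.inv_mul
    rw [this, Matrix.one_apply]
  calc pair (actA g α) (actB g β) i j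
      = ∑ l : Fin h, ∑ m : Fin h, ∑ n : Fin h,
          ((g : Matrix (Fin h) (Fin h) (PowerSeries A)) l m * α (i, m)) *
          (β (j, n) * ((g⁻¹ : GL (Fin h) (PowerSeries A)) : Matrix (Fin h) (Fin h) (PowerSeries A)) n l) := by
        simp [pair, actA, actB, Finset.sum_mul_sum]
    _ = ∑ m : Fin h, ∑ n : Fin h, α (i, m) * β (j, n) *
          ∑ l : Fin h, ((g⁻¹ : GL (Fin h) (PowerSeries A)) : Matrix (Fin h) (Fin h) (PowerSeries A)) n l *
            (g : Matrix (Fin h) (Fin h) (PowerSeries A)) l m := by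
        rw [Finset.sum_comm]
        refine Finset.sum_congr rfl fun m _ => ?_
        rw [Finset.sum_comm]
        refine Finset.sum_congr rfl fun n _ => ?_
        rw [Finset.mul_sum]
        exact Finset.sum_congr rfl fun l _ => by ring
    _ = pair α β i j := by
        simp only [hkey, mul_ite, mul_one, mul_zero, Finset.sum_ite_eq, Finset.sum_ite_eq',
          Finset.mem_univ, if_true, pair]

lemma evalArc_Xgen_act (g : GL (Fin h) (PowerSeries A)) (α : Fin p × Fin h → PowerSeries A)
    (β : Fin q × Fin h → PowerSeries A) (i : Fin p) (j : Fin q) (k : ℕ) :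
    evalArc (K := K) (actA g α) (actB g β) (XgenK K p q h i j k) =
      evalArc (K := K) α β (XgenK K p q h i j k) := by
  rw [evalArc_Xgen, evalArc_Xgen, pair_act]

lemma evalArc_Delta (α : Fin p × Fin h → PowerSeries A) (β : Fin q × Fin h → PowerSeries A)
    (hp : h ≤ p) (hq : h ≤ q) :
    evalArc (K := K) α β (DeltaK K p q h hp hq) =
      (Matrix.of fun i j : Fin h =>
        evalArc (K := K) α β (XgenK K p q h (Fin.castLE hp i) (Fin.castLE hq j) 0)).det := by
  rw [DeltaK, show (evalArc (K := K) α β) ((Matrix.of fun i j : Fin h =>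
    XgenK K p q h (Fin.castLE hp i) (Fin.castLE hq j) 0).det) =
    (evalArc (K := K) α β).toRingHom ((Matrix.of fun i j : Fin h =>
    XgenK K p q h (Fin.castLE hp i) (Fin.castLE hq j) 0).det) from rfl,
    RingHom.map_det]
  rfl

lemma evalArc_Delta_act (g : GL (Fin h) (PowerSeries A)) (α : Fin p × Fin h → PowerSeries A)
    (β : Fin q × Fin h → PowerSeries A) (hp : h ≤ p) (hq : h ≤ q) :
    evalArc (K := K) (actA g α) (actB g β) (DeltaK K p q h hp hq) =
      evalArc (K := K) α β (DeltaK K p q h hp hq) := by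
  rw [evalArc_Delta, evalArc_Delta]
  congr 1
  ext i j
  simp only [Matrix.of_apply]
  exact evalArc_Xgen_act g α β _ _ 0

lemma det_mem {T : Type} [CommRing T] [Algebra K T] (S : Subalgebra K T) {n : ℕ}
    (M : Matrix (Fin n) (Fin n) T) (hM : ∀ i j, M i j ∈ S) : M.det ∈ S := by
  rw [Matrix.det_apply]
  exact Subalgebra.sum_mem _ fun σ _ => by
    rw [Units.smul_def]
    exact Subalgebra.zsmul_mem _ (Subalgebra.prod_mem _ fun i _ => hM _ _) _

/-- power series all of whose coefficients lie in `C` -/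
def coeffIn (C : Subalgebra K A) : Subalgebra K (PowerSeries A) where
  carrier := {f | ∀ n, PowerSeries.coeff (R := A) n f ∈ C}
  add_mem' := fun hf hg n => by simpa using add_mem (hf n) (hg n)
  mul_mem' := fun {f g} hf hg n => by
    rw [PowerSeries.coeff_mul]
    exact Subalgebra.sum_mem _ fun m _ => mul_mem (hf _) (hg _)
  algebraMap_mem' := fun r n => by
    rw [PowerSeries.algebraMap_apply, PowerSeries.coeff_C]
    split
    · exact C.algebraMap_mem r
    · exact C.zero_mem

lemma mem_coeffIn {C : Subalgebra K A} {f : PowerSeries A} :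
    f ∈ coeffIn C ↔ ∀ n, PowerSeries.coeff (R := A) n f ∈ C := Iff.rfl

lemma aeval_mem {σ : Type} {T : Type} [CommRing T] [Algebra K T] (C : Subalgebra K T)
    (g : σ → T) (hg : ∀ v, g v ∈ C) (f : MvPolynomial σ K) : aeval g f ∈ C := by
  induction f using MvPolynomial.induction_on with
  | C a => simpa using C.algebraMap_mem a
  | add f₁ f₂ hf₁ hf₂ => simpa using add_mem hf₁ hf₂
  | mul_X f₁ v hf₁ => simpa using mul_mem hf₁ (hg v)

section Universal

variable (K : Type) [Field K] (p q h : ℕ) (hp : h ≤ p) (hq : h ≤ q)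

abbrev LocA := Localization.Away (DeltaK K p q h hp hq)

/-- the universal arc for the `W`-components -/
noncomputable def alphaU : Fin p × Fin h → PowerSeries (LocA K p q h hp hq) :=
  fun v => PowerSeries.mk fun k => algebraMap (BK K p q h) _ (X (.inl (v.1, v.2, k)))

/-- the universal arc for the `W^*`-components -/
noncomputable def betaU : Fin q × Fin h → PowerSeries (LocA K p q h hp hq) :=
  fun v => PowerSeries.mk fun k => algebraMap (BK K p q h) _ (X (.inr (v.1, v.2, k)))

lemma evalArc_univ (f : BK K p q h) :
    evalArc (K := K) (alphaU K p q h hp hq) (betaU K p q h hp hq) f =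
      algebraMap (BK K p q h) (LocA K p q h hp hq) f := by
  have : evalArc (K := K) (alphaU K p q h hp hq) (betaU K p q h hp hq) =
      IsScalarTower.toAlgHom K (BK K p q h) (LocA K p q h hp hq) := by
    apply MvPolynomial.algHom_ext
    rintro (⟨i, l, k⟩ | ⟨j, l, k⟩) <;> simp [evalArc, alphaU, betaU]
  rw [this]; rfl

noncomputable def PAmat : Matrix (Fin h) (Fin h) (BK K p q h) :=
  Matrix.of fun i l => X (.inl (Fin.castLE hp i, l, 0))

noncomputable def PBmat : Matrix (Fin h) (Fin h) (BK K p q h) :=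
  Matrix.of fun l j => X (.inr (Fin.castLE hq j, l, 0))

lemma Delta_factor : DeltaK K p q h hp hq = (PAmat K p q h hp).det * (PBmat K p q h hq).det := by
  rw [DeltaK, ← Matrix.det_mul]
  congr 1
  ext i j
  simp [Matrix.mul_apply, PAmat, PBmat, XgenK, Finset.Nat.antidiagonal_zero]

lemma isUnit_algebraMap_Delta :
    IsUnit (algebraMap (BK K p q h) (LocA K p q h hp hq) (DeltaK K p q h hp hq)) :=
  IsLocalization.map_units (M := Submonoid.powers (DeltaK K p q h hp hq)) _
    ⟨_, Submonoid.mem_powers _⟩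

lemma isUnit_det_map_PA :
    IsUnit (algebraMap (BK K p q h) (LocA K p q h hp hq) (PAmat K p q h hp).det) := by
  have hu := isUnit_algebraMap_Delta K p q h hp hq
  have he := congrArg (algebraMap (BK K p q h) (LocA K p q h hp hq))
    (Delta_factor K p q h hp hq)
  rw [map_mul] at he
  rw [he] at hu
  exact isUnit_of_mul_isUnit_left hu

noncomputable def MU : Matrix (Fin h) (Fin h) (PowerSeries (LocA K p q h hp hq)) :=
  Matrix.of fun l i => alphaU K p q h hp hq (Fin.castLE hp i, l)

lemma constCoeff_det_MU :
    PowerSeries.constantCoeff (MU K p q h hp hq).det =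
      algebraMap (BK K p q h) (LocA K p q h hp hq) (PAmat K p q h hp).det := by
  rw [RingHom.map_det, RingHom.map_det,
    ← Matrix.det_transpose (((algebraMap (BK K p q h) (LocA K p q h hp hq))).mapMatrix
      (PAmat K p q h hp))]
  congr 1

lemma isUnit_MU : IsUnit (MU K p q h hp hq) := by
  rw [Matrix.isUnit_iff_isUnit_det]
  have h1 := isUnit_det_map_PA K p q h hp hq
  refine IsUnit.of_mul_eq_one (PowerSeries.invOfUnit (MU K p q h hp hq).det h1.unit)
    (PowerSeries.mul_invOfUnit _ _ ?_)
  rw [constCoeff_det_MU]; exact h1.unit_spec.symm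

/-- the normalizing arc-group element -/
noncomputable def gU : GL (Fin h) (PowerSeries (LocA K p q h hp hq)) :=
  (isUnit_MU K p q h hp hq).unit⁻¹

lemma betaU_act (j : Fin q) (l : Fin h) :
    actB (gU K p q h hp hq) (betaU K p q h hp hq) (j, l) =
      pair (alphaU K p q h hp hq) (betaU K p q h hp hq) (Fin.castLE hp l) j := by
  simp only [actB, pair]
  rw [show ((((gU K p q h hp hq)⁻¹ : GL (Fin h) _)) :
      Matrix (Fin h) (Fin h) (PowerSeries (LocA K p q h hp hq))) = MU K p q h hp hq from by
    rw [gU, inv_inv]; exact (isUnit_MU K p q h hp hq).unit_spec]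
  exact Finset.sum_congr rfl fun m _ => by rw [MU]; exact mul_comm _ _

noncomputable def PUmat : Matrix (Fin h) (Fin h) (PowerSeries (LocA K p q h hp hq)) :=
  Matrix.of fun j l => pair (alphaU K p q h hp hq) (betaU K p q h hp hq)
    (Fin.castLE hp j) (Fin.castLE hq l)

lemma constCoeff_det_PU :
    PowerSeries.constantCoeff (PUmat K p q h hp hq).det =
      algebraMap (BK K p q h) (LocA K p q h hp hq) (DeltaK K p q h hp hq) := by
  have hD : algebraMap (BK K p q h) (LocA K p q h hp hq) (DeltaK K p q h hp hq) =
      ((algebraMap (BK K p q h) (LocA K p q h hp hq)).mapMatrix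
        (Matrix.of fun i j : Fin h =>
          XgenK K p q h (Fin.castLE hp i) (Fin.castLE hq j) 0)).det :=
    RingHom.map_det _ _
  rw [RingHom.map_det, hD]
  congr 1
  ext j l
  simp only [RingHom.mapMatrix_apply, Matrix.map_apply, Matrix.of_apply, PUmat]
  rw [← PowerSeries.coeff_zero_eq_constantCoeff_apply,
    ← evalArc_Xgen (K := K) (alphaU K p q h hp hq) (betaU K p q h hp hq), evalArc_univ]

lemma isUnit_PU : IsUnit (PUmat K p q h hp hq) := by
  rw [Matrix.isUnit_iff_isUnit_det]
  have h1 := isUnit_algebraMap_Delta K p q h hp hq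
  refine IsUnit.of_mul_eq_one (PowerSeries.invOfUnit (PUmat K p q h hp hq).det h1.unit)
    (PowerSeries.mul_invOfUnit _ _ ?_)
  rw [constCoeff_det_PU]; exact h1.unit_spec.symm

lemma isUnit_det_PU : IsUnit (PUmat K p q h hp hq).det :=
  (Matrix.isUnit_iff_isUnit_det _).1 (isUnit_PU K p q h hp hq)

lemma hrow (i : Fin p) (l : Fin h) :
    pair (actA (gU K p q h hp hq) (alphaU K p q h hp hq))
        (actB (gU K p q h hp hq) (betaU K p q h hp hq)) i (Fin.castLE hq l) =
      ∑ j : Fin h, actA (gU K p q h hp hq) (alphaU K p q h hp hq) (i, j) *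
        PUmat K p q h hp hq j l := by
  unfold pair
  exact Finset.sum_congr rfl fun j _ => by rw [betaU_act, PUmat]; rfl

lemma alphaU_act_eq (i : Fin p) (l : Fin h) :
    actA (gU K p q h hp hq) (alphaU K p q h hp hq) (i, l) =
      ∑ j : Fin h, pair (alphaU K p q h hp hq) (betaU K p q h hp hq) i (Fin.castLE hq j) *
        (((isUnit_PU K p q h hp hq).unit⁻¹ : _ˣ) :
          Matrix (Fin h) (Fin h) (PowerSeries (LocA K p q h hp hq))) j l := by
  have hPP : PUmat K p q h hp hq * (((isUnit_PU K p q h hp hq).unit⁻¹ : _ˣ) :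
      Matrix (Fin h) (Fin h) (PowerSeries (LocA K p q h hp hq))) = 1 := by
    have := (isUnit_PU K p q h hp hq).unit.mul_inv
    rwa [(isUnit_PU K p q h hp hq).unit_spec] at this
  symm
  calc (∑ j : Fin h, pair (alphaU K p q h hp hq) (betaU K p q h hp hq) i (Fin.castLE hq j) *
        (((isUnit_PU K p q h hp hq).unit⁻¹ : _ˣ) :
          Matrix (Fin h) (Fin h) (PowerSeries (LocA K p q h hp hq))) j l)
      = ∑ j : Fin h, (∑ m : Fin h, actA (gU K p q h hp hq) (alphaU K p q h hp hq) (i, m) *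
          PUmat K p q h hp hq m j) *
          (((isUnit_PU K p q h hp hq).unit⁻¹ : _ˣ) :
            Matrix (Fin h) (Fin h) (PowerSeries (LocA K p q h hp hq))) j l := by
        refine Finset.sum_congr rfl fun j _ => ?_
        rw [← pair_act (gU K p q h hp hq), hrow]
    _ = ∑ m : Fin h, actA (gU K p q h hp hq) (alphaU K p q h hp hq) (i, m) *
          ∑ j : Fin h, PUmat K p q h hp hq m j *
            (((isUnit_PU K p q h hp hq).unit⁻¹ : _ˣ) :
              Matrix (Fin h) (Fin h) (PowerSeries (LocA K p q h hp hq))) j l := by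
        simp only [Finset.sum_mul, Finset.mul_sum]
        rw [Finset.sum_comm]
        exact Finset.sum_congr rfl fun m _ => Finset.sum_congr rfl fun j _ => by ring
    _ = actA (gU K p q h hp hq) (alphaU K p q h hp hq) (i, l) := by
        simp only [← Matrix.mul_apply, hPP, Matrix.one_apply, mul_ite, mul_one, mul_zero]
        simp

noncomputable def genSet : Set (LocA K p q h hp hq) :=
  (algebraMap (BK K p q h) (LocA K p q h hp hq)) ''
      (Set.range fun t : Fin p × Fin q × ℕ => XgenK K p q h t.1 t.2.1 t.2.2) ∪
    {IsLocalization.Away.invSelf (S := LocA K p q h hp hq) (DeltaK K p q h hp hq)}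

lemma pair_mem_coeffIn (i : Fin p) (j : Fin q) :
    pair (alphaU K p q h hp hq) (betaU K p q h hp hq) i j ∈
      coeffIn (Algebra.adjoin K (genSet K p q h hp hq)) := by
  refine (mem_coeffIn).2 fun n => ?_
  rw [← evalArc_Xgen (K := K) (alphaU K p q h hp hq) (betaU K p q h hp hq), evalArc_univ]
  exact Algebra.subset_adjoin (Or.inl ⟨_, ⟨(i, j, n), rfl⟩, rfl⟩)

lemma invSelf_mem :
    IsLocalization.Away.invSelf (S := LocA K p q h hp hq) (DeltaK K p q h hp hq) ∈
      Algebra.adjoin K (genSet K p q h hp hq) :=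
  Algebra.subset_adjoin (Or.inr rfl)

lemma unit_inv_eq_invSelf :
    ((((isUnit_algebraMap_Delta K p q h hp hq).unit⁻¹ : _ˣ)) : LocA K p q h hp hq) =
      IsLocalization.Away.invSelf (S := LocA K p q h hp hq) (DeltaK K p q h hp hq) := by
  have h1 := IsLocalization.Away.mul_invSelf (S := LocA K p q h hp hq) (DeltaK K p q h hp hq)
  rw [← (isUnit_algebraMap_Delta K p q h hp hq).unit_spec] at h1
  calc ((((isUnit_algebraMap_Delta K p q h hp hq).unit⁻¹ : _ˣ)) : LocA K p q h hp hq)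
      = ↑(isUnit_algebraMap_Delta K p q h hp hq).unit⁻¹ *
        (↑(isUnit_algebraMap_Delta K p q h hp hq).unit *
          IsLocalization.Away.invSelf (S := LocA K p q h hp hq) (DeltaK K p q h hp hq)) := by
        rw [h1, mul_one]
    _ = (↑(isUnit_algebraMap_Delta K p q h hp hq).unit⁻¹ *
          ↑(isUnit_algebraMap_Delta K p q h hp hq).unit) *
        IsLocalization.Away.invSelf (S := LocA K p q h hp hq) (DeltaK K p q h hp hq) := by
        ring
    _ = IsLocalization.Away.invSelf (S := LocA K p q h hp hq) (DeltaK K p q h hp hq) := by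
        rw [Units.inv_mul, one_mul]

lemma detPU_mem :
    (PUmat K p q h hp hq).det ∈ coeffIn (Algebra.adjoin K (genSet K p q h hp hq)) :=
  det_mem _ _ fun i j => pair_mem_coeffIn K p q h hp hq _ _

lemma ringInverse_detPU_mem :
    Ring.inverse (PUmat K p q h hp hq).det ∈
      coeffIn (Algebra.adjoin K (genSet K p q h hp hq)) := by
  have hconst : PowerSeries.constantCoeff (PUmat K p q h hp hq).det =
      ↑(isUnit_algebraMap_Delta K p q h hp hq).unit := by
    rw [constCoeff_det_PU]
    exact (isUnit_algebraMap_Delta K p q h hp hq).unit_spec.symm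
  have hq1 : (PUmat K p q h hp hq).det *
      PowerSeries.invOfUnit (PUmat K p q h hp hq).det
        (isUnit_algebraMap_Delta K p q h hp hq).unit = 1 :=
    PowerSeries.mul_invOfUnit _ _ hconst
  have hqmem : ∀ n, PowerSeries.coeff n
      (PowerSeries.invOfUnit (PUmat K p q h hp hq).det
        (isUnit_algebraMap_Delta K p q h hp hq).unit) ∈
      Algebra.adjoin K (genSet K p q h hp hq) := by
    intro n
    induction n using Nat.strong_induction_on with
    | _ n ih =>
      rw [PowerSeries.coeff_invOfUnit]
      split
      · rw [unit_inv_eq_invSelf]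
        exact invSelf_mem K p q h hp hq
      · refine mul_mem (neg_mem ?_) (Subalgebra.sum_mem _ fun m _ => ?_)
        · rw [unit_inv_eq_invSelf]
          exact invSelf_mem K p q h hp hq
        · split
          · exact mul_mem ((mem_coeffIn).1 (detPU_mem K p q h hp hq) _) (ih m.2 ‹_›)
          · exact zero_mem _
  have heq : Ring.inverse (PUmat K p q h hp hq).det =
      PowerSeries.invOfUnit (PUmat K p q h hp hq).det
        (isUnit_algebraMap_Delta K p q h hp hq).unit := by
    have h4 := Ring.inverse_mul_cancel _ (isUnit_det_PU K p q h hp hq)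
    calc Ring.inverse (PUmat K p q h hp hq).det
        = Ring.inverse (PUmat K p q h hp hq).det * ((PUmat K p q h hp hq).det *
          PowerSeries.invOfUnit (PUmat K p q h hp hq).det
            (isUnit_algebraMap_Delta K p q h hp hq).unit) := by rw [hq1, mul_one]
      _ = (Ring.inverse (PUmat K p q h hp hq).det * (PUmat K p q h hp hq).det) *
          PowerSeries.invOfUnit (PUmat K p q h hp hq).det
            (isUnit_algebraMap_Delta K p q h hp hq).unit := by ring
      _ = PowerSeries.invOfUnit (PUmat K p q h hp hq).det
            (isUnit_algebraMap_Delta K p q h hp hq).unit := by rw [h4, one_mul]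
  rw [heq]
  exact (mem_coeffIn).2 hqmem

lemma PUinv_mem (j l : Fin h) :
    (((isUnit_PU K p q h hp hq).unit⁻¹ : _ˣ) :
      Matrix (Fin h) (Fin h) (PowerSeries (LocA K p q h hp hq))) j l ∈
      coeffIn (Algebra.adjoin K (genSet K p q h hp hq)) := by
  have hcoe : (((isUnit_PU K p q h hp hq).unit⁻¹ : _ˣ) :
      Matrix (Fin h) (Fin h) (PowerSeries (LocA K p q h hp hq))) = (PUmat K p q h hp hq)⁻¹ := by
    rw [Matrix.coe_units_inv, IsUnit.unit_spec]
  rw [hcoe, Matrix.inv_def, Matrix.smul_apply, smul_eq_mul]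
  refine mul_mem (ringInverse_detPU_mem K p q h hp hq) ?_
  rw [Matrix.adjugate_apply]
  refine det_mem _ _ fun a b => ?_
  rw [Matrix.updateRow_apply]
  split
  · rw [Pi.single_apply]
    split
    · exact one_mem _
    · exact zero_mem _
  · exact pair_mem_coeffIn K p q h hp hq _ _

lemma alphaAct_mem (i : Fin p) (l : Fin h) :
    actA (gU K p q h hp hq) (alphaU K p q h hp hq) (i, l) ∈
      coeffIn (Algebra.adjoin K (genSet K p q h hp hq)) := by
  rw [alphaU_act_eq]
  exact Subalgebra.sum_mem _ fun j _ =>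
    mul_mem (pair_mem_coeffIn K p q h hp hq _ _) (PUinv_mem K p q h hp hq _ _)

lemma betaAct_mem (j : Fin q) (l : Fin h) :
    actB (gU K p q h hp hq) (betaU K p q h hp hq) (j, l) ∈
      coeffIn (Algebra.adjoin K (genSet K p q h hp hq)) := by
  rw [betaU_act]
  exact pair_mem_coeffIn K p q h hp hq _ _

lemma evalAct_mem (f : BK K p q h) :
    evalArc (K := K) (actA (gU K p q h hp hq) (alphaU K p q h hp hq))
      (actB (gU K p q h hp hq) (betaU K p q h hp hq)) f ∈
      Algebra.adjoin K (genSet K p q h hp hq) := by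
  refine aeval_mem _ _ ?_ f
  rintro (⟨i, l, k⟩ | ⟨j, l, k⟩)
  · exact (mem_coeffIn).1 (alphaAct_mem K p q h hp hq i l) k
  · exact (mem_coeffIn).1 (betaAct_mem K p q h hp hq j l) k

end Universal

end ArcAux

open ArcAux

/-- For `p, q ≥ h`, the invariant ring of the localization `𝔅^K_Δ` under
`J_∞(GL_h(K))` equals `𝔠^K_Δ`, the localization at `Δ` of the subring generated by
the `X_{ij}^{(k)}`.  Invariance is expressed through all `A`-points of the localized
arc space: points `(α, β)` at which `Δ` evaluates to a unit. -/
theorem localized_arc_invariants_GL (K : Type) [Field K] [IsAlgClosed K]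
    (p q h : ℕ) (hp : h ≤ p) (hq : h ≤ q) :
    {x : Localization.Away (DeltaK K p q h hp hq) |
      ∀ (A : Type) [CommRing A] [Algebra K A]
        (g : GL (Fin h) (PowerSeries A))
        (α : Fin p × Fin h → PowerSeries A) (β : Fin q × Fin h → PowerSeries A)
        (hu : IsUnit ((evalArc (K := K) α β).toRingHom (DeltaK K p q h hp hq)))
        (hu' : IsUnit ((evalArc (K := K) (actA g α) (actB g β)).toRingHom
          (DeltaK K p q h hp hq))),
        IsLocalization.Away.lift (S := Localization.Away (DeltaK K p q h hp hq))
            (DeltaK K p q h hp hq) hu' x =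
        IsLocalization.Away.lift (S := Localization.Away (DeltaK K p q h hp hq))
            (DeltaK K p q h hp hq) hu x} =
    ↑(Algebra.adjoin K
        ((algebraMap (BK K p q h) (Localization.Away (DeltaK K p q h hp hq))) ''
            (Set.range fun t : Fin p × Fin q × ℕ => XgenK K p q h t.1 t.2.1 t.2.2) ∪
          {IsLocalization.Away.invSelf (S := Localization.Away (DeltaK K p q h hp hq))
            (DeltaK K p q h hp hq)})) := by
  classical
  ext x
  simp only [Set.mem_setOf_eq, SetLike.mem_coe]
  constructor
  · -- invariants are in the localized subalgebra
    intro hx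
    have hu1 : IsUnit ((evalArc (K := K) (alphaU K p q h hp hq)
        (betaU K p q h hp hq)).toRingHom (DeltaK K p q h hp hq)) := by
      rw [show ((evalArc (K := K) (alphaU K p q h hp hq)
          (betaU K p q h hp hq)).toRingHom (DeltaK K p q h hp hq)) =
        algebraMap (BK K p q h) (LocA K p q h hp hq) (DeltaK K p q h hp hq) from
        evalArc_univ K p q h hp hq _]
      exact isUnit_algebraMap_Delta K p q h hp hq
    have hDact : ((evalArc (K := K) (actA (gU K p q h hp hq) (alphaU K p q h hp hq))
        (actB (gU K p q h hp hq) (betaU K p q h hp hq))).toRingHom (DeltaK K p q h hp hq)) =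
        algebraMap (BK K p q h) (LocA K p q h hp hq) (DeltaK K p q h hp hq) := by
      rw [show ((evalArc (K := K) (actA (gU K p q h hp hq) (alphaU K p q h hp hq))
          (actB (gU K p q h hp hq) (betaU K p q h hp hq))).toRingHom (DeltaK K p q h hp hq)) =
        evalArc (K := K) (actA (gU K p q h hp hq) (alphaU K p q h hp hq))
          (actB (gU K p q h hp hq) (betaU K p q h hp hq)) (DeltaK K p q h hp hq) from rfl,
        evalArc_Delta_act, evalArc_univ]
    have hu2 : IsUnit ((evalArc (K := K) (actA (gU K p q h hp hq) (alphaU K p q h hp hq))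
        (actB (gU K p q h hp hq) (betaU K p q h hp hq))).toRingHom (DeltaK K p q h hp hq)) := by
      rw [hDact]
      exact isUnit_algebraMap_Delta K p q h hp hq
    have hkey := hx (LocA K p q h hp hq) (gU K p q h hp hq) (alphaU K p q h hp hq)
      (betaU K p q h hp hq) hu1 hu2
    have hid : IsLocalization.Away.lift (S := Localization.Away (DeltaK K p q h hp hq))
        (DeltaK K p q h hp hq) hu1 = RingHom.id _ := by
      apply IsLocalization.ringHom_ext (Submonoid.powers (DeltaK K p q h hp hq))
      refine RingHom.ext fun a => ?_
      simp only [RingHom.comp_apply, RingHom.id_apply]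
      rw [IsLocalization.Away.lift_eq]
      exact evalArc_univ K p q h hp hq a
    have hx2 : IsLocalization.Away.lift (S := Localization.Away (DeltaK K p q h hp hq))
        (DeltaK K p q h hp hq) hu2 x = x := by
      rw [hkey, hid]; rfl
    obtain ⟨⟨f, s⟩, hs⟩ := IsLocalization.surj (Submonoid.powers (DeltaK K p q h hp hq)) x
    obtain ⟨n, hn⟩ := s.2
    have h2 := congrArg (IsLocalization.Away.lift
      (S := Localization.Away (DeltaK K p q h hp hq)) (DeltaK K p q h hp hq) hu2) hs
    rw [map_mul, IsLocalization.Away.lift_eq, IsLocalization.Away.lift_eq, hx2] at h2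
    have hsval : ((evalArc (K := K) (actA (gU K p q h hp hq) (alphaU K p q h hp hq))
        (actB (gU K p q h hp hq) (betaU K p q h hp hq))).toRingHom (↑s : BK K p q h)) =
        (algebraMap (BK K p q h) (LocA K p q h hp hq) (DeltaK K p q h hp hq)) ^ n := by
      rw [← hn, map_pow, hDact]
    rw [hsval] at h2
    have hxeq : x = ((evalArc (K := K) (actA (gU K p q h hp hq) (alphaU K p q h hp hq))
        (actB (gU K p q h hp hq) (betaU K p q h hp hq))).toRingHom f) *
        (IsLocalization.Away.invSelf (S := Localization.Away (DeltaK K p q h hp hq))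
          (DeltaK K p q h hp hq)) ^ n := by
      calc x = x * ((algebraMap (BK K p q h) (LocA K p q h hp hq) (DeltaK K p q h hp hq)) *
            IsLocalization.Away.invSelf (S := Localization.Away (DeltaK K p q h hp hq))
              (DeltaK K p q h hp hq)) ^ n := by
            rw [IsLocalization.Away.mul_invSelf, one_pow, mul_one]
        _ = (x * (algebraMap (BK K p q h) (LocA K p q h hp hq) (DeltaK K p q h hp hq)) ^ n) *
            (IsLocalization.Away.invSelf (S := Localization.Away (DeltaK K p q h hp hq))
              (DeltaK K p q h hp hq)) ^ n := by
            rw [mul_pow, ← mul_assoc]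
        _ = _ := by rw [h2]
    rw [hxeq]
    exact mul_mem (evalAct_mem K p q h hp hq f) (pow_mem (invSelf_mem K p q h hp hq) n)
  · -- the subalgebra consists of invariants
    intro hx A _ _ g α β hu hu'
    induction hx using Algebra.adjoin_induction with
    | mem y hy =>
      rcases hy with ⟨r, ⟨t, rfl⟩, rfl⟩ | rfl
      · rw [IsLocalization.Away.lift_eq, IsLocalization.Away.lift_eq]
        exact evalArc_Xgen_act g α β _ _ _
      · have hD : ((evalArc (K := K) (actA g α) (actB g β)).toRingHom
            (DeltaK K p q h hp hq)) =
            ((evalArc (K := K) α β).toRingHom (DeltaK K p q h hp hq)) :=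
          evalArc_Delta_act g α β hp hq
        have e1 := congrArg (IsLocalization.Away.lift
          (S := Localization.Away (DeltaK K p q h hp hq)) (DeltaK K p q h hp hq) hu')
          (IsLocalization.Away.mul_invSelf
            (S := Localization.Away (DeltaK K p q h hp hq)) (DeltaK K p q h hp hq))
        rw [map_mul, map_one, IsLocalization.Away.lift_eq, hD] at e1
        have e2 := congrArg (IsLocalization.Away.lift
          (S := Localization.Away (DeltaK K p q h hp hq)) (DeltaK K p q h hp hq) hu)
          (IsLocalization.Away.mul_invSelf
            (S := Localization.Away (DeltaK K p q h hp hq)) (DeltaK K p q h hp hq))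
        rw [map_mul, map_one, IsLocalization.Away.lift_eq] at e2
        calc IsLocalization.Away.lift (S := Localization.Away (DeltaK K p q h hp hq))
              (DeltaK K p q h hp hq) hu'
              (IsLocalization.Away.invSelf (S := Localization.Away (DeltaK K p q h hp hq))
                (DeltaK K p q h hp hq))
            = (((evalArc (K := K) α β).toRingHom (DeltaK K p q h hp hq)) *
                IsLocalization.Away.lift (S := Localization.Away (DeltaK K p q h hp hq))
                  (DeltaK K p q h hp hq) hu
                  (IsLocalization.Away.invSelf
                    (S := Localization.Away (DeltaK K p q h hp hq))
                    (DeltaK K p q h hp hq))) *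
              IsLocalization.Away.lift (S := Localization.Away (DeltaK K p q h hp hq))
                (DeltaK K p q h hp hq) hu'
                (IsLocalization.Away.invSelf
                  (S := Localization.Away (DeltaK K p q h hp hq))
                  (DeltaK K p q h hp hq)) := by rw [e2, one_mul]
          _ = (((evalArc (K := K) α β).toRingHom (DeltaK K p q h hp hq)) *
                IsLocalization.Away.lift (S := Localization.Away (DeltaK K p q h hp hq))
                  (DeltaK K p q h hp hq) hu'
                  (IsLocalization.Away.invSelf
                    (S := Localization.Away (DeltaK K p q h hp hq))
                    (DeltaK K p q h hp hq))) *
              IsLocalization.Away.lift (S := Localization.Away (DeltaK K p q h hp hq))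
                (DeltaK K p q h hp hq) hu
                (IsLocalization.Away.invSelf
                  (S := Localization.Away (DeltaK K p q h hp hq))
                  (DeltaK K p q h hp hq)) := by ring
          _ = _ := by rw [e1, one_mul]
    | algebraMap r =>
      have hrc : (algebraMap K (Localization.Away (DeltaK K p q h hp hq))) r =
          algebraMap (BK K p q h) (Localization.Away (DeltaK K p q h hp hq))
            (MvPolynomial.C r) := by
        rw [IsScalarTower.algebraMap_apply K (BK K p q h)
          (Localization.Away (DeltaK K p q h hp hq)) r, MvPolynomial.algebraMap_eq]
      rw [hrc, IsLocalization.Away.lift_eq, IsLocalization.Away.lift_eq]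
      show evalArc (K := K) (actA g α) (actB g β) (MvPolynomial.C r) =
        evalArc (K := K) α β (MvPolynomial.C r)
      rw [show (MvPolynomial.C r : BK K p q h) = algebraMap K (BK K p q h) r from
        (MvPolynomial.algebraMap_eq K _).symm ▸ rfl, AlgHom.commutes, AlgHom.commutes]
    | add y z hy hz ihy ihz => rw [map_add, map_add, ihy, ihz]
    | mul y z hy hz ihy ihz => rw [map_mul, map_mul, ihy, ihz]
end
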